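/- arXiv:2211.04296 — 7 statements merged into one kernel-verified Lean document; each statement's English description precedes it below -/
import Mathlib

section
/- For each i ∈ {1,2} and each integer n ≥ 1, the polynomial (−1)^{n+i} b^{(i)}_n(q) ∈ ℤ[q] has all coefficients nonnegative (i.e., each b^{(i)}_n is sign coherent with sign (−1)^{n+i}). -/
open Polynomial

lemma xpow_mul_coeff_nonneg (p : Polynomial ℤ) (k : ℕ)
    (hp : ∀ m, 0 ≤ p.coeff m) (m : ℕ) : 0 ≤ (X ^ k * p).coeff m := by
  rw [mul_comm, Polynomial.coeff_mul_X_pow']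
  split_ifs with h
  · exact hp _
  · exact le_refl 0

/-- **Sign coherence of the numerators `b^{(i)}_n`.**
For `i ∈ {1,2}` and the polynomial sequence `b = b^{(i)}` defined by `b 0 = 1`,
`b^{(1)} 1 = q`, `b^{(2)} 1 = 0` and `b (n+2) = q^(n+2) * b n - q^(n+1) * b (n+1)`,
the polynomial `(-1)^(n+i) * b n` has all coefficients nonnegative for every `n ≥ 1`. -/
theorem b_sign_coherent
    (i : ℕ) (hi : i = 1 ∨ i = 2)
    (b : ℕ → Polynomial ℤ)
    (hb0 : b 0 = 1)
    (hb1 : b 1 = if i = 1 then X else 0)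
    (hrec : ∀ n : ℕ, b (n + 2) = X ^ (n + 2) * b n - X ^ (n + 1) * b (n + 1)) :
    ∀ n : ℕ, 1 ≤ n → ∀ m : ℕ, 0 ≤ ((-1 : Polynomial ℤ) ^ (n + i) * b n).coeff m := by
  have key : ∀ n : ℕ,
      (∀ m, 0 ≤ ((-1 : Polynomial ℤ) ^ (n + 1 + i) * b (n + 1)).coeff m) ∧
      (∀ m, 0 ≤ ((-1 : Polynomial ℤ) ^ (n + 2 + i) * b (n + 2)).coeff m) := by
    intro n
    induction n with
    | zero =>
      have h2 := hrec 0
      rw [hb0, hb1] at h2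
      constructor
      · intro m
        rcases hi with h | h <;> subst h <;> simp [hb1, Polynomial.coeff_X]
        split_ifs <;> norm_num
      · intro m
        rcases hi with h | h <;> subst h
        · have hb2 : b 2 = 0 := by
            simpa [sq, pow_succ] using h2
          simp [hb2]
        · have hb2 : b 2 = X ^ 2 := by
            simpa using h2
          simp only [hb2]
          norm_num [coeff_X_pow]
          split_ifs <;> norm_num
    | succ n ih =>
      obtain ⟨h1, h2⟩ := ih
      refine ⟨h2, ?_⟩
      have e : ((-1 : Polynomial ℤ) ^ (n + 1 + 2 + i) * b (n + 1 + 2)) =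
          X ^ (n + 3) * ((-1 : Polynomial ℤ) ^ (n + 1 + i) * b (n + 1)) +
          X ^ (n + 2) * ((-1 : Polynomial ℤ) ^ (n + 2 + i) * b (n + 2)) := by
        rw [hrec (n + 1),
          show n + 1 + 2 + i = (n + 1 + i) + 2 by ring,
          show n + 2 + i = (n + 1 + i) + 1 by ring,
          pow_add, pow_succ]
        ring_nf
      intro m
      rw [e, Polynomial.coeff_add]
      exact add_nonneg (xpow_mul_coeff_nonneg _ _ h1 m)
        (xpow_mul_coeff_nonneg _ _ h2 m)
  intro n hn m
  obtain ⟨k, rfl⟩ := Nat.exists_eq_add_of_le hn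
  simpa [Nat.add_comm 1 k] using (key k).1 m
end

section
/- For each i ∈ {1,2} and each integer n > 2, the evaluation of b^{(i)}_n at q = 1 satisfies (−1)^{n+i} b^{(i)}_n(1) = F_{n−3+i}, where F_m denotes the Fibonacci numbers with F_1 = F_2 = 1 and F_{m+2} = F_{m+1} + F_m. In particular, (−1)^{n+i} b^{(i)}_n(1) is a Fibonacci number for all n > 2. -/
open Polynomial

/-- **Fibonacci evaluation of the numerators `b^{(i)}_n`.**
For `i ∈ {1,2}` and the polynomial sequence `b = b^{(i)}` defined by `b 0 = 1`,
`b^{(1)} 1 = q`, `b^{(2)} 1 = 0` and `b (n+2) = q^(n+2) * b n - q^(n+1) * b (n+1)`,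
we have `(-1)^(n+i) * (b n)(1) = F (n - 3 + i)` for every `n > 2`, where `F` is the
Fibonacci sequence with `F 1 = F 2 = 1` (Mathlib's `Nat.fib`). -/
theorem b_eval_one_fibonacci
    (i : ℕ) (hi : i = 1 ∨ i = 2)
    (b : ℕ → Polynomial ℤ)
    (hb0 : b 0 = 1)
    (hb1 : b 1 = if i = 1 then X else 0)
    (hrec : ∀ n : ℕ, b (n + 2) = X ^ (n + 2) * b n - X ^ (n + 1) * b (n + 1)) :
    ∀ n : ℕ, 2 < n → (-1 : ℤ) ^ (n + i) * (b n).eval 1 = Nat.fib (n - 3 + i) := by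
  set c : ℕ → ℤ := fun n => (b n).eval 1 with hc
  have hrec' : ∀ n, c (n + 2) = c n - c (n + 1) := by
    intro n; simp [hc, hrec n]
  have key : ∀ m, c (m + 3) = (-1 : ℤ) ^ (m + 3 + i) * Nat.fib (m + i) ∧
      c (m + 4) = (-1 : ℤ) ^ (m + 4 + i) * Nat.fib (m + 1 + i) := by
    intro m
    induction m with
    | zero =>
      have e2 := hrec' 0
      have e3 := hrec' 1
      have e4 := hrec' 2
      rcases hi with h | h <;> subst h <;>
        simp [hc, hb0, hb1, show Nat.fib 1 = 1 from rfl, show Nat.fib 2 = 1 from rfl,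
          show Nat.fib 3 = 2 from rfl] at e2 e3 e4 ⊢ <;>
        constructor <;> omega
    | succ k ih =>
      refine ⟨ih.2, ?_⟩
      have h := hrec' (k + 3)
      have hfib : (Nat.fib (k + 2 + i) : ℤ) = Nat.fib (k + i) + Nat.fib (k + 1 + i) := by
        have : k + 2 + i = (k + i) + 2 := by ring
        rw [this, Nat.fib_add_two]
        push_cast
        ring_nf
      have : c (k + 1 + 4) = c (k + 3) - c (k + 4) := h
      rw [this, ih.1, ih.2, hfib]
      have hs : (-1 : ℤ) ^ (k + 1 + 4 + i) = (-1) ^ (k + 3 + i) := by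
        rw [show k + 1 + 4 + i = (k + 3 + i) + 2 by ring, pow_add]
        norm_num
      have hs2 : (-1 : ℤ) ^ (k + 4 + i) = -(-1) ^ (k + 3 + i) := by
        rw [show k + 4 + i = (k + 3 + i) + 1 by ring, pow_succ]
        ring
      rw [hs, hs2]
      ring
  intro n hn
  obtain ⟨m, rfl⟩ : ∃ m, n = m + 3 := ⟨n - 3, by omega⟩
  show (-1 : ℤ) ^ (m + 3 + i) * c (m + 3) = Nat.fib (m + 3 - 3 + i)
  rw [show m + 3 - 3 + i = m + i by omega, (key m).1, ← mul_assoc, ← pow_add]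
  rw [Even.neg_one_pow ⟨m + 3 + i, by ring⟩, one_mul]
end

section
/- Let q be a complex number with 0 < |q| < 1 and let J : ℂ → ℂ be an entire function satisfying q·J(x) = (1 + xq)(1 + q − xq + x^2 q^3)·J(xq) − (1 + xq^2)(1 − x^2 q^2)·J(xq^2) for all x ∈ ℂ. Define K(x) = J(x)/∏_{k≥1}(1 + x q^k) for all x ∈ ℂ not of the form −q^{−k} with k ≥ 1 (the infinite product converges absolutely and is nonzero there). Then q·K(x) = (1 + q − xq + x^2 q^3)·K(xq) − (1 − xq)·K(xq^2) for all such x. -/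
open Complex

lemma summable_log_aux (q : ℂ) (hq1 : ‖q‖ < 1) (x : ℂ) :
    Summable fun n : ℕ => Complex.log (1 + x * q ^ (n + 1)) := by
  have htend : Filter.Tendsto (fun n : ℕ => x * q ^ (n + 1)) Filter.atTop (nhds 0) := by
    have := tendsto_pow_atTop_nhds_zero_of_norm_lt_one (x := q) hq1
    have := (this.comp (Filter.tendsto_add_atTop_nat 1)).const_mul x
    simpa using this
  have hev : ∀ᶠ n in Filter.atTop, ‖x * q ^ (n + 1)‖ ≤ 1/2 := by
    have := htend.norm
    simp only [norm_zero] at this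
    exact this.eventually_le_const (by norm_num)
  apply Summable.of_norm_bounded_eventually_nat (g := fun n => 3/2 * (‖x‖ * ‖q‖ ^ (n + 1)))
  · apply Summable.mul_left
    apply Summable.mul_left
    exact (summable_geometric_of_lt_one (norm_nonneg q) hq1).comp_injective
      (add_left_injective 1)
  · filter_upwards [hev] with n hn
    calc ‖Complex.log (1 + x * q ^ (n + 1))‖ ≤ 3/2 * ‖x * q ^ (n + 1)‖ :=
          Complex.norm_log_one_add_half_le_self hn
      _ = 3/2 * (‖x‖ * ‖q‖ ^ (n + 1)) := by rw [norm_mul, norm_pow]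

lemma prod_aux (q : ℂ) (hq1 : ‖q‖ < 1) (x : ℂ)
    (hne : ∀ k : ℕ, 1 + x * q ^ (k + 1) ≠ 0) :
    Multipliable (fun k : ℕ => 1 + x * q ^ (k + 1)) ∧
      (∏' k : ℕ, (1 + x * q ^ (k + 1))) ≠ 0 := by
  set α := {y : ℂ // ∀ k : ℕ, 1 + y * q ^ (k + 1) ≠ 0}
  set f : ℕ → α → ℂ := fun n a => 1 + a.1 * q ^ (n + 1) with hf
  have hfn : ∀ (a : α) (n : ℕ), f n a ≠ 0 := fun a n => a.2 n
  have hsum : ∀ a : α, Summable fun n => Complex.log (f n a) :=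
    fun a => summable_log_aux q hq1 a.1
  refine ⟨Complex.multipliable_of_summable_log (hsum ⟨x, hne⟩), ?_⟩
  have := Complex.cexp_tsum_eq_tprod (hfn ⟨x, hne⟩) (hsum ⟨x, hne⟩)
  rw [← this]
  exact Complex.exp_ne_zero _
set_option maxHeartbeats 2000000 in
/-- **From \eqref{qdif} to \eqref{qdif2}.**
Let `0 < |q| < 1` and let `J : ℂ → ℂ` be an entire function satisfying
`q·J(x) = (1+xq)(1+q-xq+x²q³)·J(xq) - (1+xq²)(1-x²q²)·J(xq²)` for all `x`.
Let `K(x) = J(x) / ∏_{k≥1} (1 + x qᵏ)`.  Then for every `x` which is not of the form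
`-q^{-k}` with `k ≥ 1` (i.e. not a zero of the infinite product) one has
`q·K(x) = (1+q-xq+x²q³)·K(xq) - (1-xq)·K(xq²)`. -/
theorem qdif_to_qdif2
    (q : ℂ) (hq0 : 0 < ‖q‖) (hq1 : ‖q‖ < 1)
    (J : ℂ → ℂ) (hJ : Differentiable ℂ J)
    (hfe : ∀ x : ℂ, q * J x =
      (1 + x * q) * (1 + q - x * q + x ^ 2 * q ^ 3) * J (x * q)
      - (1 + x * q ^ 2) * (1 - x ^ 2 * q ^ 2) * J (x * q ^ 2))
    (K : ℂ → ℂ)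
    (hK : ∀ x : ℂ, K x = J x / ∏' k : ℕ, (1 + x * q ^ (k + 1))) :
    ∀ x : ℂ, (∀ k : ℕ, x ≠ -(q ^ (k + 1))⁻¹) →
      q * K x = (1 + q - x * q + x ^ 2 * q ^ 3) * K (x * q)
        - (1 - x * q) * K (x * q ^ 2) := by
  intro x hx
  have hqne : q ≠ 0 := by
    intro h; rw [h] at hq0; simp at hq0
  have hne0 : ∀ k : ℕ, 1 + x * q ^ (k + 1) ≠ 0 := by
    intro k h
    apply hx k
    have hpow : q ^ (k + 1) ≠ 0 := pow_ne_zero _ hqne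
    have hxq : x * q ^ (k + 1) = -1 := by linear_combination h
    calc x = x * q ^ (k + 1) * (q ^ (k + 1))⁻¹ := by field_simp
      _ = -(q ^ (k + 1))⁻¹ := by rw [hxq]; ring
  have hne1 : ∀ k : ℕ, 1 + (x * q) * q ^ (k + 1) ≠ 0 := by
    intro k
    rw [show x * q * q ^ (k + 1) = x * q ^ (k + 1 + 1) from by ring]
    exact hne0 (k + 1)
  have hne2 : ∀ k : ℕ, 1 + (x * q ^ 2) * q ^ (k + 1) ≠ 0 := by
    intro k
    rw [show x * q ^ 2 * q ^ (k + 1) = x * q ^ (k + 2 + 1) from by ring]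
    exact hne0 (k + 2)
  obtain ⟨M0, P0ne⟩ := prod_aux q hq1 x hne0
  obtain ⟨M1, P1ne⟩ := prod_aux q hq1 (x * q) hne1
  obtain ⟨M2, P2ne⟩ := prod_aux q hq1 (x * q ^ 2) hne2
  have key1 : (∏' k : ℕ, (1 + x * q ^ (k + 1)))
      = (1 + x * q) * ∏' k : ℕ, (1 + (x * q) * q ^ (k + 1)) := by
    have M1' : Multipliable (fun k : ℕ => 1 + x * q ^ (k + 1 + 1)) :=
      M1.congr fun k => by ring
    rw [tprod_eq_zero_mul' M1']
    congr 1
    · norm_num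
    · exact tprod_congr fun k => by ring
  have key2 : (∏' k : ℕ, (1 + (x * q) * q ^ (k + 1)))
      = (1 + x * q ^ 2) * ∏' k : ℕ, (1 + (x * q ^ 2) * q ^ (k + 1)) := by
    have M2' : Multipliable (fun k : ℕ => 1 + (x * q) * q ^ (k + 1 + 1)) :=
      M2.congr fun k => by ring
    rw [tprod_eq_zero_mul' M2']
    congr 1
    · ring
    · exact tprod_congr fun k => by ring
  have h1 : (1 : ℂ) + x * q ≠ 0 := by
    have := hne0 0; rwa [pow_one] at this
  have h2 : (1 : ℂ) + x * q ^ 2 ≠ 0 := hne0 1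
  set p : ℂ := ∏' k : ℕ, (1 + (x * q ^ 2) * q ^ (k + 1)) with hp
  rw [hK x, hK (x * q), hK (x * q ^ 2), key1, key2, ← hp]
  have h1' : 1 + q * x ≠ 0 := by rwa [mul_comm]
  have h2' : 1 + q^2 * x ≠ 0 := by rwa [mul_comm]
  field_simp
  rw [mul_comm (q ^ 2) x, mul_comm q x]
  linear_combination hfe x
end

section
/- Let q, x be complex numbers with |q| < 1 and let F_1(x,q) = ∑_{λ ∈ STR} x^{ℓ(λ)} q^{|λ|_1}, the sum (which converges absolutely) running over all strict partitions λ. Then q^3 F_1(x,q) = (1 + q^3 − x q^3 + x q^6 + x^2 q^7 + x^2 q^8) F_1(x q^3, q) − (1 − x q^3)(1 + x q^6)(1 − x^2 q^9) F_1(x q^6, q). -/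
/-- A strict partition: a strictly decreasing list of positive integers
(the empty partition is allowed). -/
structure StrictPartition where
  parts : List ℕ
  sorted : parts.Pairwise (· > ·)
  pos : ∀ p ∈ parts, 0 < p

namespace StrictPartition

/-- The number of parts (rows) of a strict partition. -/
def length (l : StrictPartition) : ℕ := l.parts.length

/-- The number of boxes `(j+1, k)` with `1 ≤ k ≤ p` in row `j+1` (`j` is 0-indexed)
whose residue `k - (j+1)` is congruent to `i` modulo `2`. -/
def rowResidueCount (i j p : ℕ) : ℕ :=
  ((Finset.Icc 1 p).filter fun k => (k + j + 1 + i) % 2 = 0).card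

/-- `|λ|_i`: the number of boxes of `λ`, counting twice each box whose residue
`(column) - (row)` is congruent to `i` modulo `2`. -/
def wt (i : ℕ) (l : StrictPartition) : ℕ :=
  l.parts.sum + ∑ j ∈ Finset.range l.parts.length, rowResidueCount i j (l.parts.getD j 0)

end StrictPartition

namespace StrictPartition

lemma ext' {a b : StrictPartition} (h : a.parts = b.parts) : a = b := by
  cases a; cases b; simpa using h

lemma rrc_eq (i j p : ℕ) : rowResidueCount i j p = (p + 1 - (j + i) % 2) / 2 := by
  induction p with
  | zero =>
    simp only [rowResidueCount]
    rw [show Finset.Icc 1 0 = ∅ by simp]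
    simp only [Finset.filter_empty, Finset.card_empty]
    omega
  | succ p ih =>
    have hins : Finset.Icc 1 (p + 1) = insert (p + 1) (Finset.Icc 1 p) := by
      ext k; simp only [Finset.mem_Icc, Finset.mem_insert]; omega
    rw [rowResidueCount, hins, Finset.filter_insert]
    by_cases h : (p + 1 + j + 1 + i) % 2 = 0
    · rw [if_pos h, Finset.card_insert_of_notMem (by simp)]
      rw [← rowResidueCount, ih]; omega
    · rw [if_neg h, ← rowResidueCount, ih]; omega

lemma rrc_add_two (i j p : ℕ) : rowResidueCount i j (p + 2) = rowResidueCount i j p + 1 := by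
  simp only [rrc_eq]; omega

lemma rrc_two (j : ℕ) : rowResidueCount 1 j 2 = 1 := by
  simp only [rrc_eq]; omega

lemma rrc_one (j : ℕ) : rowResidueCount 1 j 1 = j % 2 := by
  simp only [rrc_eq]; omega

lemma sorted_eq_of_mem_iff {l₁ l₂ : List ℕ} (h₁ : l₁.Pairwise (· > ·)) (h₂ : l₂.Pairwise (· > ·))
    (h : ∀ a, a ∈ l₁ ↔ a ∈ l₂) : l₁ = l₂ := by
  haveI : IsAntisymm ℕ (· > ·) := ⟨fun a b hab hba => absurd (hab.trans hba) (lt_irrefl _)⟩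
  haveI : IsIrrefl ℕ (· > ·) := ⟨fun a => lt_irrefl a⟩
  exact List.Perm.eq_of_pairwise (fun a b _ _ hab hba => absurd (hab.trans hba) (lt_irrefl _)) h₁ h₂
    ((List.perm_ext_iff_of_nodup h₁.nodup h₂.nodup).2 h)

lemma nodup_parts (l : StrictPartition) : l.parts.Nodup := by
  haveI : IsIrrefl ℕ (· > ·) := ⟨fun a => lt_irrefl a⟩
  exact l.sorted.nodup

lemma sorted_split (l : List ℕ) (h : l.Pairwise (· > ·)) :
    l.filter (fun p => 2 < p) ++ l.filter (fun p => p ≤ 2) = l := by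
  induction l with
  | nil => simp
  | cons a l ih =>
    rw [List.pairwise_cons] at h
    by_cases ha : 2 < a
    · rw [List.filter_cons_of_pos (by simpa using ha),
        List.filter_cons_of_neg (by simp; omega), List.cons_append, ih h.2]
    · have hall : ∀ b ∈ l, b ≤ 2 := fun b hb => by have := h.1 b hb; omega
      rw [List.filter_cons_of_neg (by simpa using ha),
        List.filter_cons_of_pos (by simp; omega),
        List.filter_eq_nil_iff.2 (by intro b hb; simpa using (hall b hb).not_gt),
        List.nil_append, List.filter_eq_self.2 (by intro b hb; simpa using hall b hb)]

def tail (b2 b1 : Bool) : List ℕ := (bif b2 then [2] else []) ++ (bif b1 then [1] else [])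

lemma mem_tail {b2 b1 : Bool} {a : ℕ} :
    a ∈ tail b2 b1 ↔ (a = 2 ∧ b2 = true) ∨ (a = 1 ∧ b1 = true) := by
  cases b2 <;> cases b1 <;> simp [tail]

lemma tail_sorted (b2 b1 : Bool) : (tail b2 b1).Pairwise (· > ·) := by
  cases b2 <;> cases b1 <;> simp [tail]

def attach (ν : StrictPartition) (b2 b1 : Bool) : StrictPartition where
  parts := ν.parts.map (· + 2) ++ tail b2 b1
  sorted := by
    rw [List.pairwise_append]
    refine ⟨List.pairwise_map.2 (ν.sorted.imp (by intro a b hab; simpa using hab)),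
      tail_sorted b2 b1, ?_⟩
    intro a ha b hb
    rcases List.mem_map.1 ha with ⟨p, hp, rfl⟩
    have h1 := ν.pos p hp
    rcases mem_tail.1 hb with ⟨rfl, _⟩ | ⟨rfl, _⟩ <;> omega
  pos := by
    intro p hp
    rcases List.mem_append.1 hp with h | h
    · rcases List.mem_map.1 h with ⟨a, _, rfl⟩; omega
    · rcases mem_tail.1 h with ⟨rfl, _⟩ | ⟨rfl, _⟩ <;> omega

lemma attach_length (ν : StrictPartition) (b2 b1 : Bool) :
    (attach ν b2 b1).length = ν.length + (bif b2 then 1 else 0) + (bif b1 then 1 else 0) := by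
  cases b2 <;> cases b1 <;> simp [attach, tail, length]

lemma getD_map_add_two (l : List ℕ) (j : ℕ) (h : j < l.length) :
    (l.map (· + 2)).getD j 0 = l.getD j 0 + 2 := by
  rw [List.getD_eq_getElem _ _ (by simpa using h), List.getD_eq_getElem _ _ h]
  simp

lemma sum_map_add_two (l : List ℕ) : (l.map (· + 2)).sum = l.sum + 2 * l.length := by
  induction l with
  | nil => simp
  | cons a l ih => simp [ih]; ring

lemma wt_attach (ν : StrictPartition) (b2 b1 : Bool) :
    (attach ν b2 b1).wt 1 = ν.wt 1 + 3 * ν.length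
      + (bif b2 then 3 else 0)
      + (bif b1 then 1 + (ν.length + (bif b2 then 1 else 0)) % 2 else 0) := by
  have key : ∀ t : List ℕ,
      ((ν.parts.map (· + 2) ++ t).sum +
        ∑ j ∈ Finset.range (ν.parts.map (· + 2) ++ t).length,
          rowResidueCount 1 j ((ν.parts.map (· + 2) ++ t).getD j 0))
      = ν.wt 1 + 3 * ν.length +
        (t.sum + ∑ j ∈ Finset.range t.length,
          rowResidueCount 1 (ν.parts.length + j) (t.getD j 0)) := by
    intro t
    have hlen : (ν.parts.map (· + 2) ++ t).length = ν.parts.length + t.length := by simp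
    rw [hlen, Finset.sum_range_add, List.sum_append, sum_map_add_two]
    have h1 : ∀ j ∈ Finset.range ν.parts.length,
        rowResidueCount 1 j ((ν.parts.map (· + 2) ++ t).getD j 0)
          = rowResidueCount 1 j (ν.parts.getD j 0) + 1 := by
      intro j hj
      rw [Finset.mem_range] at hj
      rw [List.getD_append _ _ _ _ (by simpa using hj), getD_map_add_two _ _ hj, rrc_add_two]
    have h2 : ∀ j ∈ Finset.range t.length,
        rowResidueCount 1 (ν.parts.length + j)
            ((ν.parts.map (· + 2) ++ t).getD (ν.parts.length + j) 0)
          = rowResidueCount 1 (ν.parts.length + j) (t.getD j 0) := by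
      intro j hj
      rw [List.getD_append_right _ _ _ _ (by simp)]
      simp
    rw [Finset.sum_congr rfl h1, Finset.sum_congr rfl h2, Finset.sum_add_distrib,
      Finset.sum_const, Finset.card_range]
    simp only [wt, length, smul_eq_mul, mul_one]
    ring
  have hp : (ν.attach b2 b1).parts = ν.parts.map (· + 2) ++ tail b2 b1 := rfl
  rw [wt, hp, key (tail b2 b1)]
  cases b2 <;> cases b1 <;>
    simp [tail, Finset.sum_range_succ, rrc_two, rrc_one, length] <;> omega

def detach (l : StrictPartition) : StrictPartition where
  parts := (l.parts.filter (fun p => 2 < p)).map (· - 2)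
  sorted := by
    refine List.pairwise_map.2
      (List.Pairwise.imp_of_mem ?_ (l.sorted.sublist List.filter_sublist))
    intro a b ha hb hab
    have ha' := (List.mem_filter.1 ha).2
    have hb' := (List.mem_filter.1 hb).2
    simp only [decide_eq_true_eq] at ha' hb'
    omega
  pos := by
    intro p hp
    rcases List.mem_map.1 hp with ⟨a, ha, rfl⟩
    have := (List.mem_filter.1 ha).2
    simp only [decide_eq_true_eq] at this
    omega

noncomputable def equivAttach : StrictPartition × Bool × Bool ≃ StrictPartition where
  toFun z := attach z.1 z.2.1 z.2.2
  invFun l := (detach l, decide (2 ∈ l.parts), decide (1 ∈ l.parts))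
  left_inv := by
    rintro ⟨ν, b2, b1⟩
    have h3 : ∀ a ∈ ν.parts.map (· + 2), 2 < a := by
      intro a ha; rcases List.mem_map.1 ha with ⟨p, hp, rfl⟩
      have := ν.pos p hp; omega
    have hparts : (attach ν b2 b1).parts = ν.parts.map (· + 2) ++ tail b2 b1 := rfl
    have hfil : (attach ν b2 b1).parts.filter (fun p => 2 < p) = ν.parts.map (· + 2) := by
      rw [hparts, List.filter_append, List.filter_eq_self.2 (by simpa using h3),
        List.filter_eq_nil_iff.2 ?_, List.append_nil]
      intro a ha
      rcases mem_tail.1 ha with ⟨rfl, _⟩ | ⟨rfl, _⟩ <;> simp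
    refine Prod.ext (ext' ?_) (Prod.ext ?_ ?_)
    · show (detach (attach ν b2 b1)).parts = ν.parts
      show ((attach ν b2 b1).parts.filter (fun p => 2 < p)).map (· - 2) = ν.parts
      rw [hfil, List.map_map]
      have : ((· - 2) ∘ (· + 2) : ℕ → ℕ) = id := by funext p; simp
      rw [this, List.map_id]
    · show decide (2 ∈ (attach ν b2 b1).parts) = b2
      have : (2 ∈ (attach ν b2 b1).parts) ↔ b2 = true := by
        rw [hparts, List.mem_append, mem_tail]
        constructor
        · rintro (h | h)
          · exact absurd (h3 2 h) (by omega)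
          · rcases h with ⟨_, h⟩ | ⟨h, _⟩ <;> simp_all
        · intro h; right; left; exact ⟨rfl, h⟩
      rcases b2 <;> simp_all
    · show decide (1 ∈ (attach ν b2 b1).parts) = b1
      have : (1 ∈ (attach ν b2 b1).parts) ↔ b1 = true := by
        rw [hparts, List.mem_append, mem_tail]
        constructor
        · rintro (h | h)
          · exact absurd (h3 1 h) (by omega)
          · rcases h with ⟨h, _⟩ | ⟨_, h⟩ <;> simp_all
        · intro h; right; right; exact ⟨rfl, h⟩
      rcases b1 <;> simp_all
  right_inv := by
    intro l
    apply ext'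
    show (l.detach.parts.map (· + 2)) ++ tail (decide (2 ∈ l.parts)) (decide (1 ∈ l.parts))
      = l.parts
    have hmap : l.detach.parts.map (· + 2) = l.parts.filter (fun p => 2 < p) := by
      show ((l.parts.filter (fun p => 2 < p)).map (· - 2)).map (· + 2) = _
      rw [List.map_map]
      refine (List.map_congr_left ?_).trans (List.map_id _)
      intro a ha
      have := (List.mem_filter.1 ha).2
      simp only [decide_eq_true_eq] at this
      simp; omega
    have htail : tail (decide (2 ∈ l.parts)) (decide (1 ∈ l.parts))
        = l.parts.filter (fun p => p ≤ 2) := by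
      apply sorted_eq_of_mem_iff
      · exact tail_sorted _ _
      · exact (l.sorted.sublist List.filter_sublist)
      · intro a
        rw [mem_tail, List.mem_filter]
        simp only [decide_eq_true_eq]
        constructor
        · rintro (⟨rfl, h⟩ | ⟨rfl, h⟩) <;> exact ⟨h, by omega⟩
        · rintro ⟨ha, h2⟩
          have := l.pos a ha
          interval_cases a
          · right; exact ⟨rfl, by simpa using ha⟩
          · left; exact ⟨rfl, by simpa using ha⟩
    rw [hmap, htail, sorted_split _ l.sorted]

lemma prod_map_geom (M r : ℝ) (l : List ℕ) :
    (l.map fun p => M * r ^ p).prod = M ^ l.length * r ^ l.sum := by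
  induction l with
  | nil => simp
  | cons a l ih => simp [ih, pow_add, pow_succ]; ring

lemma summable_norm_term (x q : ℂ) (hq : ‖q‖ < 1) :
    Summable (fun l : StrictPartition => ‖x ^ l.length * q ^ l.wt 1‖) := by
  set M : ℝ := max 1 ‖x‖ with hM
  set r : ℝ := ‖q‖ with hr
  have hM1 : 1 ≤ M := le_max_left _ _
  have hM0 : 0 ≤ M := zero_le_one.trans hM1
  have hr0 : 0 ≤ r := norm_nonneg q
  set f : ℕ → ℝ := fun p => M * r ^ p with hf
  have hf0 : ∀ p, 0 ≤ f p := fun p => mul_nonneg hM0 (pow_nonneg hr0 p)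
  have hfs : Summable f := (summable_geometric_of_lt_one hr0 hq).mul_left M
  set g : StrictPartition → ℝ := fun l => ∏ p ∈ l.parts.toFinset, f p with hg
  have hg0 : ∀ l, 0 ≤ g l := fun l => Finset.prod_nonneg fun p _ => hf0 p
  have hgl : ∀ l : StrictPartition, g l = M ^ l.length * r ^ l.parts.sum := by
    intro l
    rw [hg]
    simp only
    rw [List.prod_toFinset f (nodup_parts l), prod_map_geom]
    rfl
  have hbound : ∀ l : StrictPartition, ‖x ^ l.length * q ^ l.wt 1‖ ≤ g l := by
    intro l
    rw [hgl, norm_mul, norm_pow, norm_pow]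
    have h1 : ‖x‖ ^ l.length ≤ M ^ l.length :=
      pow_le_pow_left₀ (norm_nonneg x) (le_max_right _ _) _
    have h2 : ‖q‖ ^ l.wt 1 ≤ r ^ l.parts.sum := by
      apply pow_le_pow_of_le_one hr0 hq.le
      exact Nat.le_add_right _ _
    exact mul_le_mul h1 h2 (pow_nonneg (norm_nonneg q) _) (pow_nonneg hM0 _)
  have hsg : Summable g := by
    apply summable_of_sum_le hg0
    intro S
    classical
    set N : ℕ := S.sup fun l => l.parts.sum with hN
    have hinj : Set.InjOn (fun l : StrictPartition => l.parts.toFinset) S := by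
      intro a _ b _ hab
      refine ext' (sorted_eq_of_mem_iff a.sorted b.sorted fun p => ?_)
      rw [← List.mem_toFinset, ← List.mem_toFinset]
      simp only at hab
      rw [hab]
    calc ∑ l ∈ S, g l
        = ∑ T ∈ S.image (fun l => l.parts.toFinset), ∏ p ∈ T, f p := by
          rw [Finset.sum_image (fun a ha b hb h => hinj ha hb h)]
      _ ≤ ∑ T ∈ (Finset.Icc 1 N).powerset, ∏ p ∈ T, f p := by
          apply Finset.sum_le_sum_of_subset_of_nonneg
          · intro T hT
            rcases Finset.mem_image.1 hT with ⟨l, hl, rfl⟩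
            rw [Finset.mem_powerset]
            intro p hp
            rw [List.mem_toFinset] at hp
            rw [Finset.mem_Icc]
            refine ⟨l.pos p hp, le_trans ?_ (Finset.le_sup hl)⟩
            exact List.single_le_sum (fun a _ => Nat.zero_le a) p hp
          · intro T _ _; exact Finset.prod_nonneg fun p _ => hf0 p
      _ = ∏ p ∈ Finset.Icc 1 N, (f p + 1) := by
          rw [Finset.prod_add]; simp
      _ ≤ ∏ p ∈ Finset.Icc 1 N, Real.exp (f p) := by
          apply Finset.prod_le_prod
          · intro p _; positivity
          · intro p _
            have := Real.add_one_le_exp (f p)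
            linarith
      _ = Real.exp (∑ p ∈ Finset.Icc 1 N, f p) := by rw [Real.exp_sum]
      _ ≤ Real.exp (∑' p, f p) :=
          Real.exp_le_exp.2 (hfs.sum_le_tsum _ (fun p _ => hf0 p))
  exact Summable.of_nonneg_of_le (fun l => norm_nonneg _) hbound hsg

noncomputable def Ef (q y : ℂ) : ℂ :=
  ∑' ν : StrictPartition, (if ν.length % 2 = 0 then (1:ℂ) else 0) * (y ^ ν.length * q ^ ν.wt 1)

noncomputable def Of (q y : ℂ) : ℂ :=
  ∑' ν : StrictPartition, (if ν.length % 2 = 0 then (0:ℂ) else 1) * (y ^ ν.length * q ^ ν.wt 1)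

lemma summable_indE (q y : ℂ) (hq : ‖q‖ < 1) :
    Summable (fun ν : StrictPartition =>
      (if ν.length % 2 = 0 then (1:ℂ) else 0) * (y ^ ν.length * q ^ ν.wt 1)) := by
  apply Summable.of_norm_bounded (summable_norm_term y q hq)
  intro ν
  rw [norm_mul]
  by_cases h : ν.length % 2 = 0 <;> simp [h] <;> positivity

lemma summable_indO (q y : ℂ) (hq : ‖q‖ < 1) :
    Summable (fun ν : StrictPartition =>
      (if ν.length % 2 = 0 then (0:ℂ) else 1) * (y ^ ν.length * q ^ ν.wt 1)) := by
  apply Summable.of_norm_bounded (summable_norm_term y q hq)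
  intro ν
  rw [norm_mul]
  by_cases h : ν.length % 2 = 0 <;> simp [h] <;> positivity

lemma F_split (q y : ℂ) (hq : ‖q‖ < 1) :
    ∑' ν : StrictPartition, y ^ ν.length * q ^ ν.wt 1 = Ef q y + Of q y := by
  rw [Ef, Of, ← Summable.tsum_add (summable_indE q y hq) (summable_indO q y hq)]
  apply tsum_congr
  intro ν
  by_cases h : ν.length % 2 = 0 <;> simp [h]

lemma tsum_attach_decomp (f : StrictPartition → ℂ) (hf : Summable f) :
    ∑' l : StrictPartition, f l
      = ∑' ν : StrictPartition, (f (ν.attach false false) + f (ν.attach false true)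
          + f (ν.attach true false) + f (ν.attach true true)) := by
  rw [← equivAttach.tsum_eq f]
  have hfe : Summable (fun z : StrictPartition × Bool × Bool => f (equivAttach z)) :=
    equivAttach.summable_iff.2 hf
  rw [Summable.tsum_prod' hfe (fun ν => Summable.of_finite)]
  apply tsum_congr
  intro ν
  rw [tsum_fintype]
  show ∑ bb : Bool × Bool, f (attach ν bb.1 bb.2) = _
  rw [Fintype.sum_prod_type]
  simp only [Fintype.sum_bool]
  ring

lemma rec_E (q x : ℂ) (hq : ‖q‖ < 1) :
    Ef q x = (1 + x^2*q^5) * Ef q (x*q^3) + (x*q^2 + x*q^3) * Of q (x*q^3) := by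
  rw [Ef, tsum_attach_decomp _ (summable_indE q x hq)]
  have key : ∀ ν : StrictPartition,
      ((if (ν.attach false false).length % 2 = 0 then (1:ℂ) else 0) *
          (x ^ (ν.attach false false).length * q ^ (ν.attach false false).wt 1)
        + (if (ν.attach false true).length % 2 = 0 then (1:ℂ) else 0) *
          (x ^ (ν.attach false true).length * q ^ (ν.attach false true).wt 1)
        + (if (ν.attach true false).length % 2 = 0 then (1:ℂ) else 0) *
          (x ^ (ν.attach true false).length * q ^ (ν.attach true false).wt 1)
        + (if (ν.attach true true).length % 2 = 0 then (1:ℂ) else 0) *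
          (x ^ (ν.attach true true).length * q ^ (ν.attach true true).wt 1))
      = (1 + x^2*q^5) *
          ((if ν.length % 2 = 0 then (1:ℂ) else 0) * ((x*q^3) ^ ν.length * q ^ ν.wt 1))
        + (x*q^2 + x*q^3) *
          ((if ν.length % 2 = 0 then (0:ℂ) else 1) * ((x*q^3) ^ ν.length * q ^ ν.wt 1)) := by
    intro ν
    simp only [attach_length, wt_attach]
    by_cases h : ν.length % 2 = 0
    · have h1 : (ν.length + 0 + 1) % 2 = 1 := by omega
      have h2 : (ν.length + 1 + 0) % 2 = 1 := by omega
      have h3 : (ν.length + 1 + 1) % 2 = 0 := by omega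
      have h4 : (ν.length + 1) % 2 = 1 := by omega
      simp only [cond_false, cond_true, Nat.add_zero, h, h1, h2, h3, h4, if_pos, if_neg,
        one_ne_zero, reduceIte]
      simp only [pow_add, pow_mul, mul_pow]
      norm_num
      ring
    · have h1 : (ν.length + 0 + 1) % 2 = 0 := by omega
      have h2 : (ν.length + 1 + 0) % 2 = 0 := by omega
      have h3 : (ν.length + 1 + 1) % 2 ≠ 0 := by omega
      have h5 : ν.length % 2 = 1 := by omega
      simp only [cond_false, cond_true, Nat.add_zero, h, h1, h2, h3, h5, reduceIte]
      simp only [pow_add, pow_mul, mul_pow]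
      norm_num
      ring
  rw [tsum_congr key, Summable.tsum_add, tsum_mul_left, tsum_mul_left, ← Ef, ← Of]
  · exact ((summable_indE q (x*q^3) hq).mul_left _)
  · exact ((summable_indO q (x*q^3) hq).mul_left _)

lemma rec_O (q x : ℂ) (hq : ‖q‖ < 1) :
    Of q x = (x*q + x*q^3) * Ef q (x*q^3) + (1 + x^2*q^4) * Of q (x*q^3) := by
  rw [Of, tsum_attach_decomp _ (summable_indO q x hq)]
  have key : ∀ ν : StrictPartition,
      ((if (ν.attach false false).length % 2 = 0 then (0:ℂ) else 1) *
          (x ^ (ν.attach false false).length * q ^ (ν.attach false false).wt 1)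
        + (if (ν.attach false true).length % 2 = 0 then (0:ℂ) else 1) *
          (x ^ (ν.attach false true).length * q ^ (ν.attach false true).wt 1)
        + (if (ν.attach true false).length % 2 = 0 then (0:ℂ) else 1) *
          (x ^ (ν.attach true false).length * q ^ (ν.attach true false).wt 1)
        + (if (ν.attach true true).length % 2 = 0 then (0:ℂ) else 1) *
          (x ^ (ν.attach true true).length * q ^ (ν.attach true true).wt 1))
      = (x*q + x*q^3) *
          ((if ν.length % 2 = 0 then (1:ℂ) else 0) * ((x*q^3) ^ ν.length * q ^ ν.wt 1))
        + (1 + x^2*q^4) *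
          ((if ν.length % 2 = 0 then (0:ℂ) else 1) * ((x*q^3) ^ ν.length * q ^ ν.wt 1)) := by
    intro ν
    simp only [attach_length, wt_attach]
    by_cases h : ν.length % 2 = 0
    · have h1 : (ν.length + 0 + 1) % 2 = 1 := by omega
      have h2 : (ν.length + 1 + 0) % 2 = 1 := by omega
      have h3 : (ν.length + 1 + 1) % 2 = 0 := by omega
      have h4 : (ν.length + 1) % 2 = 1 := by omega
      simp only [cond_false, cond_true, Nat.add_zero, h, h1, h2, h3, h4, reduceIte]
      simp only [pow_add, pow_mul, mul_pow]
      norm_num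
      ring
    · have h1 : (ν.length + 0 + 1) % 2 = 0 := by omega
      have h2 : (ν.length + 1 + 0) % 2 = 0 := by omega
      have h3 : (ν.length + 1 + 1) % 2 ≠ 0 := by omega
      have h5 : ν.length % 2 = 1 := by omega
      simp only [cond_false, cond_true, Nat.add_zero, h, h1, h2, h3, h5, reduceIte]
      simp only [pow_add, pow_mul, mul_pow]
      norm_num
      ring
  rw [tsum_congr key, Summable.tsum_add, tsum_mul_left, tsum_mul_left, ← Ef, ← Of]
  · exact ((summable_indE q (x*q^3) hq).mul_left _)
  · exact ((summable_indO q (x*q^3) hq).mul_left _)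

end StrictPartition

/-- **The `q`-difference equation \eqref{qd2} for `F₁(x,q) = ∑_{λ ∈ STR} x^{ℓ(λ)} q^{|λ|₁}`.**
For `|q| < 1` the sum converges absolutely and
`q³ F₁(x,q) = (1+q³-xq³+xq⁶+x²q⁷+x²q⁸) F₁(xq³,q) - (1-xq³)(1+xq⁶)(1-x²q⁹) F₁(xq⁶,q)`. -/
theorem qdifference_F_one
    (q x : ℂ) (hq : ‖q‖ < 1) :
    Summable (fun p : StrictPartition => ‖x ^ p.length * q ^ p.wt 1‖) ∧
    q ^ 3 * (∑' p : StrictPartition, x ^ p.length * q ^ p.wt 1) =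
      (1 + q ^ 3 - x * q ^ 3 + x * q ^ 6 + x ^ 2 * q ^ 7 + x ^ 2 * q ^ 8) *
        (∑' p : StrictPartition, (x * q ^ 3) ^ p.length * q ^ p.wt 1)
      - (1 - x * q ^ 3) * (1 + x * q ^ 6) * (1 - x ^ 2 * q ^ 9) *
        (∑' p : StrictPartition, (x * q ^ 6) ^ p.length * q ^ p.wt 1) := by
  have hq' : ‖q‖ < 1 := hq
  refine ⟨StrictPartition.summable_norm_term x q hq', ?_⟩
  rw [StrictPartition.F_split q x hq', StrictPartition.F_split q (x*q^3) hq',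
    StrictPartition.F_split q (x*q^6) hq']
  have h36 : x * q ^ 3 * q ^ 3 = x * q ^ 6 := by ring
  have hEx := StrictPartition.rec_E q x hq'
  have hOx := StrictPartition.rec_O q x hq'
  have hEy := StrictPartition.rec_E q (x*q^3) hq'
  have hOy := StrictPartition.rec_O q (x*q^3) hq'
  rw [h36] at hEy hOy
  rw [hEx, hOx, hEy, hOy]
  ring
end

section
/- Let q, x be complex numbers with |q| < 1 and let F_2(x,q) = ∑_{λ ∈ STR} x^{ℓ(λ)} q^{|λ|_2}, the sum (which converges absolutely) running over all strict partitions λ. Then q^3 F_2(x,q) = (1 + q^3 − x q^3 + x q^6 + x^2 q^7 + x^2 q^8) F_2(x q^3, q) − (1 − x q^3)(1 + x q^6)(1 − x^2 q^9) F_2(x q^6, q). -/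
namespace StrictPartition

lemma card_filter_even_Icc (c p : ℕ) :
    ((Finset.Icc 1 p).filter fun k => (k + c) % 2 = 0).card = (p + c % 2) / 2 := by
  induction p with
  | zero => simp
  | succ n ih =>
      have : Finset.Icc 1 (n + 1) = insert (n + 1) (Finset.Icc 1 n) := by
        ext k; simp [Finset.mem_Icc]; omega
      rw [this, Finset.filter_insert]
      by_cases h : (n + 1 + c) % 2 = 0
      · rw [if_pos h, Finset.card_insert_of_notMem (by simp), ih]; omega
      · rw [if_neg h, ih]; omega

lemma rc2 (j p : ℕ) : rowResidueCount 2 j p = (p + (j + 1) % 2) / 2 := by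
  unfold rowResidueCount
  have h : (Finset.Icc 1 p).filter (fun k => (k + j + 1 + 2) % 2 = 0)
      = (Finset.Icc 1 p).filter (fun k => (k + (j + 3)) % 2 = 0) := by
    apply Finset.filter_congr; intro k _; constructor <;> (intro hk; omega)
  rw [h, card_filter_even_Icc]; omega

/-- Adding 2 to every part. -/
def shift (l : StrictPartition) : StrictPartition where
  parts := l.parts.map (· + 2)
  sorted := l.sorted.map _ (fun _ _ h => by omega)
  pos := by
    intro p hp
    simp only [List.mem_map] at hp
    obtain ⟨a, -, rfl⟩ := hp; omega

@[simp] lemma shift_length (l : StrictPartition) : (shift l).length = l.length := by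
  simp [shift, length]

lemma shift_injective : Function.Injective shift := by
  intro a b h
  apply ext'
  have h2 := congrArg parts h
  simp only [shift] at h2
  exact List.map_injective_iff.2 (fun a b => by omega) h2

lemma shift_wt (l : StrictPartition) : (shift l).wt 2 = l.wt 2 + 3 * l.length := by
  have hsum : ∀ L : List ℕ, (L.map (· + 2)).sum = L.sum + 2 * L.length := by
    intro L; induction L with
    | nil => simp
    | cons a t ih => simp [ih]; omega
  unfold wt
  have hlen : (shift l).parts.length = l.parts.length := by simp [shift]
  rw [hlen]
  have hrc : ∀ j ∈ Finset.range l.parts.length,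
      rowResidueCount 2 j ((shift l).parts.getD j 0)
        = rowResidueCount 2 j (l.parts.getD j 0) + 1 := by
    intro j hj
    rw [Finset.mem_range] at hj
    have h1 : (shift l).parts.getD j 0 = l.parts.getD j 0 + 2 := by
      rw [List.getD_eq_getElem _ _ (by simpa [shift] using hj),
        List.getD_eq_getElem _ _ hj]
      simp [shift]
    rw [h1, rc2, rc2]; omega
  rw [Finset.sum_congr rfl hrc, Finset.sum_add_distrib, Finset.sum_const, Finset.card_range]
  have := hsum l.parts
  simp only [shift] at this ⊢
  rw [this]
  unfold length
  simp only [smul_eq_mul, mul_one]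
  omega

lemma exists_shift (l : StrictPartition) (h : ∀ p ∈ l.parts, 3 ≤ p) :
    ∃ μ : StrictPartition, shift μ = l := by
  refine ⟨⟨l.parts.map (· - 2), ?_, ?_⟩, ?_⟩
  · rw [List.pairwise_map]
    refine l.sorted.imp_of_mem ?_
    intro a b ha hb hab
    have := h a ha; have := h b hb; omega
  · intro p hp
    simp only [List.mem_map] at hp
    obtain ⟨a, ha, rfl⟩ := hp
    have := h a ha; omega
  · apply ext'
    simp only [shift, List.map_map]
    rw [List.map_congr_left (g := id) (by intro a ha; have := h a ha; simp; omega)]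
    simp

/-- Appending a new smallest part `m`. -/
def push (m : ℕ) (hm : 0 < m) (l : StrictPartition) (h : ∀ p ∈ l.parts, m + 1 ≤ p) :
    StrictPartition where
  parts := l.parts ++ [m]
  sorted := by
    rw [List.pairwise_append]
    refine ⟨l.sorted, List.pairwise_singleton _ _, ?_⟩
    intro a ha b hb
    simp only [List.mem_singleton] at hb
    subst hb
    have := h a ha; omega
  pos := by
    intro p hp
    rcases List.mem_append.1 hp with h' | h'
    · exact l.pos p h'
    · simp only [List.mem_singleton] at h'; omega

@[simp] lemma push_length (m hm l h) : (push m hm l h).length = l.length + 1 := by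
  simp [push, length]

lemma push_wt (m hm l h) :
    (push m hm l h).wt 2 = l.wt 2 + m + rowResidueCount 2 l.length m := by
  unfold wt
  have hlen : (push m hm l h).parts.length = l.parts.length + 1 := by simp [push]
  rw [hlen, Finset.sum_range_succ]
  have hlast : (push m hm l h).parts.getD l.parts.length 0 = m := by
    simp only [push]
    rw [List.getD_append_right _ _ _ _ (le_refl _)]
    simp
  have hrest : ∀ j ∈ Finset.range l.parts.length,
      rowResidueCount 2 j ((push m hm l h).parts.getD j 0)
        = rowResidueCount 2 j (l.parts.getD j 0) := by
    intro j hj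
    rw [Finset.mem_range] at hj
    congr 1
    simp only [push]
    exact List.getD_append _ _ _ _ hj
  rw [Finset.sum_congr rfl hrest, hlast]
  have : (push m hm l h).parts.sum = l.parts.sum + m := by simp [push]
  rw [this]
  unfold length
  omega

lemma exists_push (m : ℕ) (hm : 0 < m) (l : StrictPartition)
    (hall : ∀ p ∈ l.parts, m ≤ p) (hmem : m ∈ l.parts) :
    ∃ (μ : StrictPartition) (h : ∀ p ∈ μ.parts, m + 1 ≤ p), push m hm μ h = l := by
  have key : ∀ L : List ℕ, L.Pairwise (· > ·) → m ∈ L → (∀ p ∈ L, m ≤ p) →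
      ∃ L', L = L' ++ [m] ∧ L'.Pairwise (· > ·) ∧ ∀ p ∈ L', m + 1 ≤ p := by
    intro L
    induction L with
    | nil => intro _ hmem' _; simp at hmem'
    | cons a t ih =>
        intro hs hmem' hall'
        match t, hs, hmem', hall', ih with
        | [], _, hmem', _, _ =>
            refine ⟨[], ?_, List.Pairwise.nil, by simp⟩
            simp at hmem' ⊢
            omega
        | b :: t2, hs, hmem', hall', ih =>
            have hst : (b :: t2).Pairwise (· > ·) := (List.pairwise_cons.1 hs).2
            have hagt : ∀ p ∈ b :: t2, a > p := (List.pairwise_cons.1 hs).1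
            have hma : m ≠ a := by
              intro he
              have := hagt b (by simp)
              have := hall' b (by simp [he])
              omega
            have hmt : m ∈ b :: t2 := by
              rcases List.mem_cons.1 hmem' with h' | h'
              · exact absurd h'.symm (by omega)
              · exact h'
            obtain ⟨L', hL, hLs, hLgt⟩ := ih hst hmt (fun p hp => hall' p (List.mem_cons_of_mem _ hp))
            refine ⟨a :: L', by simp [hL], ?_, ?_⟩
            · rw [List.pairwise_cons]
              refine ⟨?_, hLs⟩
              intro p hp
              exact hagt p (by rw [hL]; exact List.mem_append_left _ hp)
            · intro p hp
              rcases List.mem_cons.1 hp with h' | h'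
              · subst h'
                have := hall' p (by simp)
                omega
              · exact hLgt p h'
  obtain ⟨L', hL, hLs, hLgt⟩ := key l.parts l.sorted hmem hall
  refine ⟨⟨L', hLs, fun p hp => by have := hLgt p hp; omega⟩, hLgt, ?_⟩
  apply ext'
  simp [push, hL.symm]

lemma parts_sum_le_wt (l : StrictPartition) : l.parts.sum ≤ l.wt 2 := Nat.le_add_right _ _

lemma parts_ge_one (l : StrictPartition) : ∀ p ∈ l.parts, 1 ≤ p := fun p hp => l.pos p hp

lemma list_prod_eq (t r : ℝ) : ∀ L : List ℕ,
    (L.map fun p => t * r ^ p).prod = t ^ L.length * r ^ L.sum := by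
  intro L; induction L with
  | nil => simp
  | cons a tl ih => simp [ih, pow_succ, pow_add]; ring

/-- Master summability bound. -/
lemma master {t r : ℝ} (ht : 0 ≤ t) (hr0 : 0 ≤ r) (hr1 : r < 1) :
    Summable (fun l : StrictPartition => t ^ l.length * r ^ l.wt 2) := by
  apply summable_of_sum_le (c := Real.exp (t * (1 - r)⁻¹))
  · intro l; positivity
  · intro u
    set N := u.sup (fun l => l.parts.sum) with hN
    have step1 : ∀ l ∈ u, t ^ l.length * r ^ l.wt 2 ≤ ∏ p ∈ l.parts.toFinset, (t * r ^ p) := by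
      intro l _
      rw [List.prod_toFinset _ l.sorted.nodup, list_prod_eq]
      refine mul_le_mul_of_nonneg_left ?_ (by positivity)
      exact pow_le_pow_of_le_one hr0 hr1.le (parts_sum_le_wt l)
    have inj : ∀ a ∈ u, ∀ b ∈ u, a.parts.toFinset = b.parts.toFinset → a = b := by
      intro a _ b _ hab
      apply ext'
      refine List.Perm.eq_of_pairwise (fun _ _ _ _ h1 h2 => absurd (lt_trans h1 h2) (lt_irrefl _)) a.sorted b.sorted ?_
      exact List.perm_of_nodup_nodup_toFinset_eq a.sorted.nodup b.sorted.nodup hab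
    calc ∑ l ∈ u, t ^ l.length * r ^ l.wt 2
        ≤ ∑ l ∈ u, ∏ p ∈ l.parts.toFinset, (t * r ^ p) := Finset.sum_le_sum step1
      _ = ∑ T ∈ u.image (fun l => l.parts.toFinset), ∏ p ∈ T, (t * r ^ p) := by
          rw [Finset.sum_image inj]
      _ ≤ ∑ T ∈ (Finset.Icc 1 N).powerset, ∏ p ∈ T, (t * r ^ p) := by
          apply Finset.sum_le_sum_of_subset_of_nonneg
          · intro T hT
            rw [Finset.mem_image] at hT
            obtain ⟨l, hl, rfl⟩ := hT
            rw [Finset.mem_powerset]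
            intro p hp
            rw [List.mem_toFinset] at hp
            rw [Finset.mem_Icc]
            refine ⟨l.pos p hp, ?_⟩
            calc p ≤ l.parts.sum := List.single_le_sum (fun x _ => Nat.zero_le x) _ hp
              _ ≤ N := Finset.le_sup (f := fun l : StrictPartition => l.parts.sum) hl
          · intro T _ _; positivity
      _ = ∏ p ∈ Finset.Icc 1 N, (t * r ^ p + 1) := by
          rw [Finset.prod_add]
          simp
      _ ≤ ∏ p ∈ Finset.Icc 1 N, Real.exp (t * r ^ p) := by
          apply Finset.prod_le_prod
          · intro p _; positivity
          · intro p _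
            have := Real.add_one_le_exp (t * r ^ p)
            linarith
      _ = Real.exp (∑ p ∈ Finset.Icc 1 N, t * r ^ p) := (Real.exp_sum _ _).symm
      _ ≤ Real.exp (t * (1 - r)⁻¹) := by
          apply Real.exp_le_exp.2
          rw [← Finset.mul_sum]
          refine mul_le_mul_of_nonneg_left ?_ ht
          have hsum : Summable (fun p : ℕ => r ^ p) := summable_geometric_of_lt_one hr0 hr1
          calc ∑ p ∈ Finset.Icc 1 N, r ^ p
              ≤ ∑' p : ℕ, r ^ p := Summable.sum_le_tsum _ (fun p _ => by positivity) hsum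
            _ = (1 - r)⁻¹ := tsum_geometric_of_lt_one hr0 hr1

/-- The parity/min-part-restricted generating function. -/
noncomputable def T (q x : ℂ) (b m : ℕ) : ℂ :=
  ∑' l : StrictPartition,
    if l.length % 2 = b ∧ ∀ p ∈ l.parts, m ≤ p then x ^ l.length * q ^ l.wt 2 else 0

lemma summable_ind {q : ℂ} (hq : ‖q‖ < 1) (x : ℂ) (P : StrictPartition → Prop)
    [DecidablePred P] :
    Summable (fun l : StrictPartition => if P l then x ^ l.length * q ^ l.wt 2 else 0) := by
  apply Summable.of_norm_bounded (master (norm_nonneg x) (norm_nonneg q) hq)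
  intro l
  by_cases h : P l
  · rw [if_pos h, norm_mul, norm_pow, norm_pow]
  · rw [if_neg h, norm_zero]; positivity

lemma Tsplit {q x : ℂ} (hq : ‖q‖ < 1) (b m : ℕ) :
    T q x b m = T q x b (m + 1) +
      ∑' l : StrictPartition,
        if l.length % 2 = b ∧ (∀ p ∈ l.parts, m ≤ p) ∧ m ∈ l.parts
        then x ^ l.length * q ^ l.wt 2 else 0 := by
  unfold T
  rw [← Summable.tsum_add (summable_ind hq x _) (summable_ind hq x _)]
  apply tsum_congr
  intro l
  by_cases h1 : l.length % 2 = b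
  · by_cases h2 : m ∈ l.parts
    · have h4 : ¬ ∀ p ∈ l.parts, m + 1 ≤ p := by
        intro hc; have := hc m h2; omega
      by_cases h3 : ∀ p ∈ l.parts, m ≤ p
      · rw [if_pos ⟨h1, h3⟩, if_neg (fun hc => h4 hc.2), if_pos ⟨h1, h3, h2⟩, zero_add]
      · rw [if_neg (fun hc => h3 hc.2), if_neg (fun hc => h4 hc.2),
          if_neg (fun hc => h3 hc.2.1), add_zero]
    · by_cases h3 : ∀ p ∈ l.parts, m ≤ p
      · have h4 : ∀ p ∈ l.parts, m + 1 ≤ p := by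
          intro p hp
          have hle := h3 p hp
          have : p ≠ m := fun he => h2 (he ▸ hp)
          omega
        rw [if_pos ⟨h1, h3⟩, if_pos ⟨h1, h4⟩, if_neg (fun hc => h2 hc.2.2), add_zero]
      · have h4 : ¬ ∀ p ∈ l.parts, m + 1 ≤ p := fun hc => h3 fun p hp => by
          have := hc p hp; omega
        rw [if_neg (fun hc => h3 hc.2), if_neg (fun hc => h4 hc.2),
          if_neg (fun hc => h3 hc.2.1), add_zero]
  · rw [if_neg (fun hc => h1 hc.1), if_neg (fun hc => h1 hc.1),
      if_neg (fun hc => h1 hc.1), add_zero]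

lemma Tpush {q x : ℂ} (b m : ℕ) (hb : b < 2) (hm : 0 < m) :
    (∑' l : StrictPartition,
        if l.length % 2 = b ∧ (∀ p ∈ l.parts, m ≤ p) ∧ m ∈ l.parts
        then x ^ l.length * q ^ l.wt 2 else 0)
      = x * q ^ (m + (m + b % 2) / 2) * T q x ((b + 1) % 2) (m + 1) := by
  classical
  set f : StrictPartition → ℂ := fun l =>
    if l.length % 2 = b ∧ (∀ p ∈ l.parts, m ≤ p) ∧ m ∈ l.parts
    then x ^ l.length * q ^ l.wt 2 else 0 with hf
  set S : Set StrictPartition := {l | ∀ p ∈ l.parts, m + 1 ≤ p} with hS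
  set i : S → StrictPartition := fun μ => push m hm μ.1 μ.2 with hi
  have hinj : Function.Injective i := by
    intro a b hab
    apply Subtype.ext; apply ext'
    have h2 := congrArg parts hab
    simp only [hi, push] at h2
    simpa using h2
  have hsupp : Function.support f ⊆ Set.range i := by
    intro l hl
    rw [Function.mem_support, hf] at hl
    by_cases hcond : l.length % 2 = b ∧ (∀ p ∈ l.parts, m ≤ p) ∧ m ∈ l.parts
    · obtain ⟨h1, h2, h3⟩ := hcond
      obtain ⟨μ, hμ, he⟩ := exists_push m hm l h2 h3
      exact ⟨⟨μ, hμ⟩, he⟩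
    · simp only [if_neg hcond] at hl
      exact absurd rfl hl
  rw [← hinj.tsum_eq hsupp]
  have hcomp : ∀ μ : S, f (i μ) = x * q ^ (m + (m + b % 2) / 2) *
      (if μ.1.length % 2 = (b + 1) % 2 then x ^ μ.1.length * q ^ μ.1.wt 2 else 0) := by
    intro μ
    rw [hf]
    simp only [hi]
    have hc2 : ∀ p ∈ (push m hm μ.1 μ.2).parts, m ≤ p := by
      intro p hp
      simp only [push, List.mem_append, List.mem_singleton] at hp
      rcases hp with h | h
      · have := μ.2 p h; omega
      · omega
    have hc3 : m ∈ (push m hm μ.1 μ.2).parts := by simp [push]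
    by_cases hp : μ.1.length % 2 = (b + 1) % 2
    · have h1 : (push m hm μ.1 μ.2).length % 2 = b := by rw [push_length]; omega
      rw [if_pos ⟨h1, hc2, hc3⟩, if_pos hp, push_length, push_wt, rc2]
      have hE : (m + (μ.1.length + 1) % 2) / 2 = (m + b % 2) / 2 := by omega
      rw [hE, pow_succ, pow_add, pow_add, pow_add]
      ring
    · have h1 : ¬ (push m hm μ.1 μ.2).length % 2 = b := by rw [push_length]; omega
      rw [if_neg (fun hc => h1 hc.1), if_neg hp, mul_zero]
  rw [tsum_congr hcomp, tsum_mul_left]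
  congr 1
  unfold T
  rw [tsum_subtype S (fun l => if l.length % 2 = (b + 1) % 2
    then x ^ l.length * q ^ l.wt 2 else 0)]
  apply tsum_congr
  intro l
  rw [Set.indicator_apply]
  by_cases hls : l ∈ S
  · have hls' : ∀ p ∈ l.parts, m + 1 ≤ p := hls
    by_cases hl2 : l.length % 2 = (b + 1) % 2
    · rw [if_pos hls, if_pos hl2, if_pos ⟨hl2, hls'⟩]
    · rw [if_pos hls, if_neg hl2, if_neg (fun hc => hl2 hc.1)]
  · have hls' : ¬ ∀ p ∈ l.parts, m + 1 ≤ p := hls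
    rw [if_neg hls, if_neg (fun hc => hls' hc.2)]

lemma Tshift {q : ℂ} (b : ℕ) (y : ℂ) :
    T q y b 3 = T q (y * q ^ 3) b 1 := by
  unfold T
  set f : StrictPartition → ℂ := fun l =>
    if l.length % 2 = b ∧ ∀ p ∈ l.parts, 3 ≤ p then y ^ l.length * q ^ l.wt 2 else 0 with hf
  have hsupp : Function.support f ⊆ Set.range shift := by
    intro l hl
    rw [Function.mem_support] at hl
    by_cases hcond : l.length % 2 = b ∧ ∀ p ∈ l.parts, 3 ≤ p
    · exact exists_shift l hcond.2
    · exfalso; apply hl; simp only [hf, if_neg hcond]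
  rw [← shift_injective.tsum_eq hsupp]
  apply tsum_congr
  intro μ
  have hc2 : ∀ p ∈ (shift μ).parts, 3 ≤ p := by
    intro p hp
    simp only [shift, List.mem_map] at hp
    obtain ⟨a, ha, rfl⟩ := hp
    have := μ.pos a ha; omega
  have key : f (shift μ) =
      (if μ.length % 2 = b then y ^ μ.length * q ^ (μ.wt 2 + 3 * μ.length) else 0) := by
    simp only [hf]
    by_cases h1 : μ.length % 2 = b
    · rw [if_pos ⟨by rwa [shift_length], hc2⟩, if_pos h1, shift_length, shift_wt]
    · rw [if_neg ?_, if_neg h1]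
      intro hc
      obtain ⟨hc1, -⟩ := hc
      rw [shift_length] at hc1
      exact h1 hc1
  rw [key]
  by_cases h1 : μ.length % 2 = b
  · rw [if_pos h1, if_pos ⟨h1, parts_ge_one μ⟩, mul_pow, pow_add, pow_mul]
    ring
  · rw [if_neg h1, if_neg (fun hc => h1 hc.1)]

lemma Fsplit {q : ℂ} (hq : ‖q‖ < 1) (y : ℂ) :
    (∑' l : StrictPartition, y ^ l.length * q ^ l.wt 2) = T q y 0 1 + T q y 1 1 := by
  unfold T
  rw [← Summable.tsum_add (summable_ind hq y _) (summable_ind hq y _)]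
  apply tsum_congr
  intro l
  by_cases h0 : l.length % 2 = 0
  · rw [if_pos ⟨h0, parts_ge_one l⟩, if_neg (fun hc => absurd hc.1 (by omega)), add_zero]
  · have h1 : l.length % 2 = 1 := by omega
    rw [if_neg (fun hc => absurd hc.1 (by omega)), if_pos ⟨h1, parts_ge_one l⟩, zero_add]

end StrictPartition

/-- **The `q`-difference equation \eqref{qd2} for `F₂(x,q) = ∑_{λ ∈ STR} x^{ℓ(λ)} q^{|λ|₂}`.**
For `|q| < 1` the sum converges absolutely and
`q³ F₂(x,q) = (1+q³-xq³+xq⁶+x²q⁷+x²q⁸) F₂(xq³,q) - (1-xq³)(1+xq⁶)(1-x²q⁹) F₂(xq⁶,q)`. -/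
theorem qdifference_F_two
    (q x : ℂ) (hq : ‖q‖ < 1) :
    Summable (fun p : StrictPartition => ‖x ^ p.length * q ^ p.wt 2‖) ∧
    q ^ 3 * (∑' p : StrictPartition, x ^ p.length * q ^ p.wt 2) =
      (1 + q ^ 3 - x * q ^ 3 + x * q ^ 6 + x ^ 2 * q ^ 7 + x ^ 2 * q ^ 8) *
        (∑' p : StrictPartition, (x * q ^ 3) ^ p.length * q ^ p.wt 2)
      - (1 - x * q ^ 3) * (1 + x * q ^ 6) * (1 - x ^ 2 * q ^ 9) *
        (∑' p : StrictPartition, (x * q ^ 6) ^ p.length * q ^ p.wt 2) := by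
  have hq' : ‖q‖ < 1 := hq
  open StrictPartition in
  constructor
  · exact (master (norm_nonneg x) (norm_nonneg q) hq').congr
      (fun l => by rw [norm_mul, norm_pow, norm_pow])
  · have e01 : ∀ y : ℂ, T q y 0 1 = T q y 0 2 + y * q * T q y 1 2 := by
      intro y
      rw [Tsplit hq' 0 1, Tpush 0 1 (by norm_num) (by norm_num)]
      try norm_num
    have e11 : ∀ y : ℂ, T q y 1 1 = T q y 1 2 + y * q ^ 2 * T q y 0 2 := by
      intro y
      rw [Tsplit hq' 1 1, Tpush 1 1 (by norm_num) (by norm_num)]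
      try norm_num
    have e02 : ∀ y : ℂ, T q y 0 2 = T q y 0 3 + y * q ^ 3 * T q y 1 3 := by
      intro y
      rw [Tsplit hq' 0 2, Tpush 0 2 (by norm_num) (by norm_num)]
      try norm_num
    have e12 : ∀ y : ℂ, T q y 1 2 = T q y 1 3 + y * q ^ 3 * T q y 0 3 := by
      intro y
      rw [Tsplit hq' 1 2, Tpush 1 2 (by norm_num) (by norm_num)]
      try norm_num
    rw [Fsplit hq' x, Fsplit hq' (x * q ^ 3), Fsplit hq' (x * q ^ 6)]
    rw [e01 x, e11 x, e02 x, e12 x, Tshift 0 x, Tshift 1 x,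
      e01 (x * q ^ 3), e11 (x * q ^ 3), e02 (x * q ^ 3), e12 (x * q ^ 3),
      Tshift 0 (x * q ^ 3), Tshift 1 (x * q ^ 3),
      show x * q ^ 3 * q ^ 3 = x * q ^ 6 from by ring]
    ring
end

section
/- Let q be a complex number with |q| < 1. For every integer n ≥ 0, the series ∑_{λ ∈ STR, ℓ(λ) = n} q^{|λ|_1} over all strict partitions with exactly n parts converges absolutely and equals c^{(1)}_n(q)/(q^3;q^3)_n, where c^{(1)}_n is the polynomial sequence defined in the context with i = 1. -/
namespace StrictPartition

theorem ext'_s11 {p q : StrictPartition} (h : p.parts = q.parts) : p = q := by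
  cases p; cases q; simpa using h

theorem rowResidueCount_eq (i j p : ℕ) :
    rowResidueCount i j p = (p + (j + i + 1) % 2) / 2 := by
  induction p with
  | zero => simp [rowResidueCount]
  | succ p ih =>
      rw [rowResidueCount, show Finset.Icc 1 (p+1) = insert (p+1) (Finset.Icc 1 p) by
        rw [Finset.insert_Icc_right_eq_Icc_add_one (by omega)]]
      rw [Finset.filter_insert]
      by_cases h : (p + 1 + j + 1 + i) % 2 = 0
      · rw [if_pos h, Finset.card_insert_of_notMem (by simp)]
        rw [rowResidueCount] at ih
        omega
      · rw [if_neg h]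
        rw [rowResidueCount] at ih
        omega

theorem sum_getD (l : List ℕ) : ∑ j ∈ Finset.range l.length, l.getD j 0 = l.sum := by
  induction l with
  | nil => simp
  | cons a t ih =>
      simp only [List.length_cons, Finset.sum_range_succ', List.getD_cons_succ,
        List.getD_cons_zero, List.sum_cons, ih]
      omega

theorem wt_eq (i : ℕ) (l : StrictPartition) :
    l.wt i = ∑ j ∈ Finset.range l.parts.length,
      (l.parts.getD j 0 + (l.parts.getD j 0 + (j + i + 1) % 2) / 2) := by
  rw [wt, ← sum_getD l.parts, ← Finset.sum_add_distrib]
  exact Finset.sum_congr rfl fun j _ => by rw [rowResidueCount_eq]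

/-- add 1 to every part -/
def addCol (μ : StrictPartition) : StrictPartition where
  parts := μ.parts.map (· + 1)
  sorted := by
    rw [List.pairwise_map]
    exact μ.sorted.imp (by omega)
  pos := by intro p hp; simp only [List.mem_map] at hp; omega

/-- add 1 to every part and append a new part equal to 1 -/
def addColOne (μ : StrictPartition) : StrictPartition where
  parts := μ.parts.map (· + 1) ++ [1]
  sorted := by
    rw [List.pairwise_append]
    refine ⟨?_, by simp, ?_⟩
    · rw [List.pairwise_map]; exact μ.sorted.imp (by omega)
    · intro x hx y hy
      simp only [List.mem_map] at hx
      simp only [List.mem_singleton] at hy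
      obtain ⟨a, ha, rfl⟩ := hx
      have := μ.pos a ha
      omega
  pos := by
    intro p hp
    simp only [List.mem_append, List.mem_map, List.mem_singleton] at hp
    rcases hp with ⟨x, _, rfl⟩ | rfl <;> omega

@[simp] theorem length_addCol (μ : StrictPartition) : μ.addCol.length = μ.length := by
  simp [addCol, length]

@[simp] theorem length_addColOne (μ : StrictPartition) : μ.addColOne.length = μ.length + 1 := by
  simp [addColOne, length]

theorem getD_map_add_one (l : List ℕ) {j : ℕ} (h : j < l.length) :
    (l.map (· + 1)).getD j 0 = l.getD j 0 + 1 := by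
  rw [List.getD_eq_getElem _ _ (by simpa using h), List.getD_eq_getElem _ _ h]
  simp

theorem sum_mod2 (n : ℕ) : ∑ j ∈ Finset.range n, (1 + j % 2) = 3 * n / 2 := by
  induction n with
  | zero => simp
  | succ n ih =>
      rw [Finset.sum_range_succ, ih]
      obtain ⟨m, hm⟩ | ⟨m, hm⟩ := Nat.even_or_odd n <;> omega

theorem sum_mod2' (n : ℕ) : ∑ j ∈ Finset.range n, (1 + (j + 1) % 2) = (3 * n + 1) / 2 := by
  induction n with
  | zero => simp
  | succ n ih =>
      rw [Finset.sum_range_succ, ih]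
      obtain ⟨m, hm⟩ | ⟨m, hm⟩ := Nat.even_or_odd n <;> omega

theorem wt_addCol_one (μ : StrictPartition) :
    μ.addCol.wt 1 = μ.wt 2 + 3 * μ.length / 2 := by
  simp only [length]
  rw [wt_eq, wt_eq, ← sum_mod2 μ.parts.length, ← Finset.sum_add_distrib]
  have hl : μ.addCol.parts.length = μ.parts.length := by simp [addCol]
  rw [hl]
  refine Finset.sum_congr rfl fun j hj => ?_
  rw [show μ.addCol.parts = μ.parts.map (· + 1) from rfl,
    getD_map_add_one _ (Finset.mem_range.mp hj)]
  omega

theorem wt_addCol_two (μ : StrictPartition) :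
    μ.addCol.wt 2 = μ.wt 1 + (3 * μ.length + 1) / 2 := by
  simp only [length]
  rw [wt_eq, wt_eq, ← sum_mod2' μ.parts.length, ← Finset.sum_add_distrib]
  have hl : μ.addCol.parts.length = μ.parts.length := by simp [addCol]
  rw [hl]
  refine Finset.sum_congr rfl fun j hj => ?_
  rw [show μ.addCol.parts = μ.parts.map (· + 1) from rfl,
    getD_map_add_one _ (Finset.mem_range.mp hj)]
  omega

theorem parts_addColOne (μ : StrictPartition) :
    μ.addColOne.parts = μ.parts.map (· + 1) ++ [1] := rfl

theorem getD_addColOne (μ : StrictPartition) {j : ℕ} (h : j < μ.parts.length) :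
    μ.addColOne.parts.getD j 0 = μ.parts.getD j 0 + 1 := by
  rw [parts_addColOne, List.getD_append _ _ _ _ (by simpa using h),
    getD_map_add_one _ h]

theorem getD_addColOne_last (μ : StrictPartition) :
    μ.addColOne.parts.getD μ.parts.length 0 = 1 := by
  rw [parts_addColOne, List.getD_eq_getElem _ _ (by simp)]
  simp

theorem wt_addColOne_one (μ : StrictPartition) :
    μ.addColOne.wt 1 = μ.wt 2 + 3 * (μ.length + 1) / 2 := by
  have hl : μ.addColOne.parts.length = μ.parts.length + 1 := by simp [addColOne]
  rw [wt_eq, wt_eq, hl, Finset.sum_range_succ, getD_addColOne_last]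
  have : ∑ j ∈ Finset.range μ.parts.length,
      (μ.addColOne.parts.getD j 0 + (μ.addColOne.parts.getD j 0 + (j + 1 + 1) % 2) / 2)
      = ∑ j ∈ Finset.range μ.parts.length,
      ((μ.parts.getD j 0 + (μ.parts.getD j 0 + (j + 2 + 1) % 2) / 2) + (1 + j % 2)) := by
    refine Finset.sum_congr rfl fun j hj => ?_
    rw [getD_addColOne _ (Finset.mem_range.mp hj)]
    omega
  rw [this, Finset.sum_add_distrib, sum_mod2]
  simp only [length]
  obtain ⟨m, hm⟩ | ⟨m, hm⟩ := Nat.even_or_odd μ.parts.length <;> omega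

theorem wt_addColOne_two (μ : StrictPartition) :
    μ.addColOne.wt 2 = μ.wt 1 + (3 * (μ.length + 1) + 1) / 2 := by
  have hl : μ.addColOne.parts.length = μ.parts.length + 1 := by simp [addColOne]
  rw [wt_eq, wt_eq, hl, Finset.sum_range_succ, getD_addColOne_last]
  have : ∑ j ∈ Finset.range μ.parts.length,
      (μ.addColOne.parts.getD j 0 + (μ.addColOne.parts.getD j 0 + (j + 2 + 1) % 2) / 2)
      = ∑ j ∈ Finset.range μ.parts.length,
      ((μ.parts.getD j 0 + (μ.parts.getD j 0 + (j + 1 + 1) % 2) / 2) + (1 + (j + 1) % 2)) := by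
    refine Finset.sum_congr rfl fun j hj => ?_
    rw [getD_addColOne _ (Finset.mem_range.mp hj)]
    omega
  rw [this, Finset.sum_add_distrib, sum_mod2']
  simp only [length]
  obtain ⟨m, hm⟩ | ⟨m, hm⟩ := Nat.even_or_odd μ.parts.length <;> omega

/-- the inverse of stripping a column from a strict partition with `n+1` parts -/
def unstrip (n : ℕ) :
    {p : StrictPartition // p.length = n + 1} ⊕ {p : StrictPartition // p.length = n} →
    {p : StrictPartition // p.length = n + 1} :=
  Sum.elim (fun μ => ⟨μ.1.addCol, by rw [length_addCol, μ.2]⟩)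
    (fun ν => ⟨ν.1.addColOne, by rw [length_addColOne, ν.2]⟩)

theorem unstrip_bijective (n : ℕ) : Function.Bijective (unstrip n) := by
  constructor
  · rintro (⟨μ, hμ⟩ | ⟨μ, hμ⟩) (⟨ν, hν⟩ | ⟨ν, hν⟩) h <;>
      simp only [unstrip, Sum.elim_inl, Sum.elim_inr, Subtype.mk.injEq] at h
    · have : μ.parts = ν.parts := by
        have h' : μ.parts.map (· + 1) = ν.parts.map (· + 1) := congrArg parts h
        exact List.map_injective_iff.mpr (fun a b => by omega) h'
      simp [Subtype.ext_iff, ext'_s11 this]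
    · exfalso
      have h' : μ.parts.map (· + 1) = ν.parts.map (· + 1) ++ [1] := congrArg parts h
      have h1 : (1 : ℕ) ∈ ν.parts.map (· + 1) ++ [1] := by simp
      rw [← h'] at h1
      simp only [List.mem_map] at h1
      obtain ⟨a, ha, ha1⟩ := h1
      have := μ.pos a ha
      omega
    · exfalso
      have h' : μ.parts.map (· + 1) ++ [1] = ν.parts.map (· + 1) := congrArg parts h
      have h1 : (1 : ℕ) ∈ μ.parts.map (· + 1) ++ [1] := by simp
      rw [h'] at h1
      simp only [List.mem_map] at h1
      obtain ⟨a, ha, ha1⟩ := h1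
      have := ν.pos a ha
      omega
    · have h' : μ.parts.map (· + 1) ++ [1] = ν.parts.map (· + 1) ++ [1] := congrArg parts h
      have h'' : μ.parts.map (· + 1) = ν.parts.map (· + 1) :=
        List.append_cancel_right h'
      have : μ.parts = ν.parts := List.map_injective_iff.mpr (fun a b => by omega) h''
      simp [Subtype.ext_iff, ext'_s11 this]
  · rintro ⟨lam, hlam⟩
    by_cases h1 : (1 : ℕ) ∈ lam.parts
    · -- lam.parts = s ++ [1]
      obtain ⟨s, t, hst⟩ := List.append_of_mem h1
      have hso := lam.sorted
      rw [hst, List.pairwise_append] at hso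
      obtain ⟨hs, ht, hcross⟩ := hso
      have ht0 : t = [] := by
        rw [List.eq_nil_iff_forall_not_mem]
        intro y hy
        have h1y : (1:ℕ) > y := (List.pairwise_cons.mp ht).1 y hy
        have := lam.pos y (by rw [hst]; simp [hy])
        omega
      subst ht0
      have hs2 : ∀ x ∈ s, 2 ≤ x := by
        intro x hx
        have := hcross x hx 1 (by simp)
        omega
      refine ⟨Sum.inr ⟨⟨s.map (· - 1), ?_, ?_⟩, ?_⟩, ?_⟩
      · rw [List.pairwise_map]
        refine hs.imp_of_mem ?_
        intro a b ha hb hab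
        have := hs2 b hb
        omega
      · intro p hp
        simp only [List.mem_map] at hp
        obtain ⟨a, ha, rfl⟩ := hp
        have := hs2 a ha
        omega
      · have : lam.parts.length = s.length + 1 := by rw [hst]; simp
        simp only [length] at hlam ⊢
        simp only [List.length_map]
        omega
      · simp only [unstrip, Sum.elim_inr]
        refine Subtype.ext (ext'_s11 ?_)
        show (s.map (· - 1)).map (· + 1) ++ [1] = lam.parts
        rw [hst, List.map_map]
        congr 1
        refine List.map_congr_left ?_ |>.trans (List.map_id s)
        intro a ha
        have := hs2 a ha
        simp only [Function.comp_apply, id_eq]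
        omega
    · -- all parts ≥ 2
      have h2 : ∀ x ∈ lam.parts, 2 ≤ x := by
        intro x hx
        have := lam.pos x hx
        have hx1 : x ≠ 1 := fun e => h1 (e ▸ hx)
        omega
      refine ⟨Sum.inl ⟨⟨lam.parts.map (· - 1), ?_, ?_⟩, ?_⟩, ?_⟩
      · rw [List.pairwise_map]
        refine lam.sorted.imp_of_mem ?_
        intro a b ha hb hab
        have := h2 b hb
        omega
      · intro p hp
        simp only [List.mem_map] at hp
        obtain ⟨a, ha, rfl⟩ := hp
        have := h2 a ha
        omega
      · simp only [length, List.length_map] at hlam ⊢; exact hlam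
      · simp only [unstrip, Sum.elim_inl]
        refine Subtype.ext (ext'_s11 ?_)
        show (lam.parts.map (· - 1)).map (· + 1) = lam.parts
        rw [List.map_map]
        refine List.map_congr_left ?_ |>.trans (List.map_id _)
        intro a ha
        have := h2 a ha
        simp only [Function.comp_apply, id_eq]
        omega

theorem summable_pi_pow {r : ℝ} (h0 : 0 ≤ r) (h1 : r < 1) (n : ℕ) :
    Summable (fun v : Fin n → ℕ => r ^ (∑ j, v j)) := by
  induction n with
  | zero =>
      refine (hasSum_single (f := fun v : Fin 0 → ℕ => r ^ (∑ j, v j))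
        (fun j => j.elim0) ?_).summable
      intro b hb
      exact absurd (funext fun j => j.elim0) hb
  | succ n ih =>
      have hprod : Summable (fun x : ℕ × (Fin n → ℕ) => r ^ x.1 * r ^ (∑ j, x.2 j)) :=
        Summable.mul_of_nonneg (f := fun k : ℕ => r ^ k)
          (g := fun v : Fin n → ℕ => r ^ (∑ j, v j))
          (summable_geometric_of_lt_one h0 h1) ih
          (fun x => pow_nonneg h0 x) (fun v => pow_nonneg h0 _)
      have := (Fin.consEquiv fun _ => ℕ).symm.summable_iff.mpr hprod
      refine this.congr fun v => ?_
      simp only [Function.comp_apply, Fin.consEquiv_symm_apply]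
      rw [Fin.sum_univ_succ, pow_add]
      rfl

theorem summable_norm_wt {q : ℂ} (hq : ‖q‖ < 1) (i n : ℕ) :
    Summable (fun p : {p : StrictPartition // p.length = n} => ‖(q : ℂ) ^ p.1.wt i‖) := by
  have h0 : (0:ℝ) ≤ ‖q‖ := norm_nonneg q
  set r := ‖q‖ with hr
  have key : Summable (fun v : Fin n → ℕ => r ^ (∑ j, v j)) := summable_pi_pow h0 hq n
  have hinj : Function.Injective
      (fun p : {p : StrictPartition // p.length = n} => fun j : Fin n => p.1.parts.getD j 0) := by
    intro p p' h
    have hlen : p.1.parts.length = p'.1.parts.length := by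
      have h1 : p.1.length = n := p.2
      have h2 : p'.1.length = n := p'.2
      simp only [length] at h1 h2
      omega
    refine Subtype.ext (ext'_s11 ?_)
    refine List.ext_getElem hlen fun j hj hj' => ?_
    have hjn : j < n := by
      have h1 : p.1.length = n := p.2
      simp only [length] at h1
      omega
    have h2 := congrFun h ⟨j, hjn⟩
    simp only [] at h2
    rwa [List.getD_eq_getElem _ _ hj, List.getD_eq_getElem _ _ hj'] at h2
  have hcomp : Summable ((fun v : Fin n → ℕ => r ^ (∑ j, v j)) ∘
      (fun p : {p : StrictPartition // p.length = n} => fun j : Fin n => p.1.parts.getD j 0)) :=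
    key.comp_injective hinj
  refine Summable.of_nonneg_of_le (fun p => norm_nonneg _) (fun p => ?_) hcomp
  rw [norm_pow, ← hr]
  simp only [Function.comp_apply]
  refine pow_le_pow_of_le_one h0 (le_of_lt hq) ?_
  have hn : p.1.parts.length = n := by
    have h1 : p.1.length = n := p.2
    simpa only [length] using h1
  have hsum : ∑ j : Fin n, p.1.parts.getD j 0 = p.1.parts.sum := by
    rw [Fin.sum_univ_eq_sum_range (fun k => p.1.parts.getD k 0) n]
    have h3 := sum_getD p.1.parts
    rw [hn] at h3
    exact h3
  rw [hsum]
  exact Nat.le_add_right _ _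

theorem summable_wt {q : ℂ} (hq : ‖q‖ < 1) (i n : ℕ) :
    Summable (fun p : {p : StrictPartition // p.length = n} => (q : ℂ) ^ p.1.wt i) :=
  Summable.of_norm (summable_norm_wt hq i n)

theorem tsum_sum_type {α β : Type} (f : α ⊕ β → ℂ) (h : Summable f) :
    ∑' x, f x = (∑' a, f (Sum.inl a)) + ∑' b, f (Sum.inr b) := by
  rw [← (Equiv.sumEquivSigmaBool α β).symm.tsum_eq f]
  have hs : Summable (f ∘ (Equiv.sumEquivSigmaBool α β).symm) :=
    (Equiv.summable_iff _).mpr h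
  rw [show (fun s => f ((Equiv.sumEquivSigmaBool α β).symm s))
      = f ∘ (Equiv.sumEquivSigmaBool α β).symm from rfl]
  rw [Summable.tsum_sigma hs]
  rw [tsum_bool]
  rfl
noncomputable def SPsum (q : ℂ) (i n : ℕ) : ℂ :=
  ∑' p : {p : StrictPartition // p.length = n}, q ^ p.1.wt i

theorem SPsum_zero (q : ℂ) (i : ℕ) : SPsum q i 0 = 1 := by
  rw [SPsum, tsum_eq_single (⟨⟨[], by simp, by simp⟩, rfl⟩ : {p : StrictPartition // p.length = 0})]
  · simp [wt]
  · intro b hb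
    exfalso
    apply hb
    refine Subtype.ext (ext'_s11 ?_)
    exact List.length_eq_zero_iff.mp b.2
    
theorem SPsum_rec (q : ℂ) (hq : ‖q‖ < 1) (n : ℕ) :
    SPsum q 1 (n+1) = q ^ (3*(n+1)/2) * (SPsum q 2 (n+1) + SPsum q 2 n) ∧
    SPsum q 2 (n+1) = q ^ ((3*(n+1)+1)/2) * (SPsum q 1 (n+1) + SPsum q 1 n) := by
  constructor
  · rw [SPsum, ← Equiv.tsum_eq (Equiv.ofBijective _ (unstrip_bijective n)) (fun p : {p : StrictPartition // p.length = n+1} => q ^ p.1.wt 1)]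
    have hsummable : Summable (fun x => q ^ ((unstrip n x).1.wt 1)) := by
      have := (Equiv.summable_iff (Equiv.ofBijective _ (unstrip_bijective n))).mpr (summable_wt hq 1 (n+1))
      exact this
    rw [show (fun a => q ^ (((Equiv.ofBijective _ (unstrip_bijective n)) a).1.wt 1)) = (fun a => q ^ ((unstrip n a).1.wt 1)) from rfl]
    rw [tsum_sum_type _ hsummable]
    have h1 : ∀ μ : {p : StrictPartition // p.length = n+1},
        q ^ ((unstrip n (Sum.inl μ)).1.wt 1) = q ^ (μ.1.wt 2) * q ^ (3*(n+1)/2) := by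
      intro μ
      rw [show (unstrip n (Sum.inl μ)).1 = μ.1.addCol from rfl, wt_addCol_one, μ.2, pow_add]
    have h2 : ∀ ν : {p : StrictPartition // p.length = n},
        q ^ ((unstrip n (Sum.inr ν)).1.wt 1) = q ^ (ν.1.wt 2) * q ^ (3*(n+1)/2) := by
      intro ν
      rw [show (unstrip n (Sum.inr ν)).1 = ν.1.addColOne from rfl, wt_addColOne_one, ν.2, pow_add]
    rw [tsum_congr h1, tsum_congr h2, tsum_mul_right, tsum_mul_right]
    rw [SPsum, SPsum]
    ring
  · rw [SPsum, ← Equiv.tsum_eq (Equiv.ofBijective _ (unstrip_bijective n)) (fun p : {p : StrictPartition // p.length = n+1} => q ^ p.1.wt 2)]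
    have hsummable : Summable (fun x => q ^ ((unstrip n x).1.wt 2)) := by
      have := (Equiv.summable_iff (Equiv.ofBijective _ (unstrip_bijective n))).mpr (summable_wt hq 2 (n+1))
      exact this
    rw [show (fun a => q ^ (((Equiv.ofBijective _ (unstrip_bijective n)) a).1.wt 2)) = (fun a => q ^ ((unstrip n a).1.wt 2)) from rfl]
    rw [tsum_sum_type _ hsummable]
    have h1 : ∀ μ : {p : StrictPartition // p.length = n+1},
        q ^ ((unstrip n (Sum.inl μ)).1.wt 2) = q ^ (μ.1.wt 1) * q ^ ((3*(n+1)+1)/2) := by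
      intro μ
      rw [show (unstrip n (Sum.inl μ)).1 = μ.1.addCol from rfl, wt_addCol_two, μ.2, pow_add]
    have h2 : ∀ ν : {p : StrictPartition // p.length = n},
        q ^ ((unstrip n (Sum.inr ν)).1.wt 2) = q ^ (ν.1.wt 1) * q ^ ((3*(n+1)+1)/2) := by
      intro ν
      rw [show (unstrip n (Sum.inr ν)).1 = ν.1.addColOne from rfl, wt_addColOne_two, ν.2, pow_add]
    rw [tsum_congr h1, tsum_congr h2, tsum_mul_right, tsum_mul_right]
    rw [SPsum, SPsum]
    ring
theorem fourterm {q : ℂ} {F G : ℕ → ℂ}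
    (hF : ∀ n, F (n+1) = q^(3*n+3) * F n + q^((3*n+3)/2) * G n)
    (hG : ∀ n, G (n+1) = q^(3*n+3) * G n + q^((3*n+4)/2) * F n) :
    ∀ n, F (n+4) = -q^(3*n+9) * (1 - q^3) * F (n+3)
      + q^(3*n+10) * (1 + q + 2*q^(3*n+8)) * F (n+2)
      - q^(6*n+15) * (1-q^3) * (1-q^(3*n+6)) * F (n+1)
      - q^(6*n+15) * (1-q^(3*n+6)) * (1-q^(3*n+3)) * F n := by
  intro n
  obtain ⟨m, rfl⟩ | ⟨m, rfl⟩ := Nat.even_or_odd n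
  · -- n = m + m
    have F1 : F (m+m+1) = q^(m*6+3) * F (m+m) + q^(m*3+1) * G (m+m) := by
      have h := hF (m+m)
      rw [show 3*(m+m)+3 = m*6+3 by ring, show (m*6+3)/2 = m*3+1 by omega] at h
      exact h
    have G1 : G (m+m+1) = q^(m*6+3) * G (m+m) + q^(m*3+2) * F (m+m) := by
      have h := hG (m+m)
      rw [show 3*(m+m)+3 = m*6+3 by ring, show 3*(m+m)+4 = m*6+4 by ring,
        show (m*6+4)/2 = m*3+2 by omega] at h
      exact h
    have F2 : F (m+m+2) = q^(m*6+6) * F (m+m+1) + q^(m*3+3) * G (m+m+1) := by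
      have h := hF (m+m+1)
      rw [show 3*(m+m+1)+3 = m*6+6 by ring, show (m*6+6)/2 = m*3+3 by omega,
        show m+m+1+1 = m+m+2 by omega] at h
      exact h
    have G2 : G (m+m+2) = q^(m*6+6) * G (m+m+1) + q^(m*3+3) * F (m+m+1) := by
      have h := hG (m+m+1)
      rw [show 3*(m+m+1)+3 = m*6+6 by ring, show 3*(m+m+1)+4 = m*6+7 by ring,
        show (m*6+7)/2 = m*3+3 by omega, show m+m+1+1 = m+m+2 by omega] at h
      exact h
    have F3 : F (m+m+3) = q^(m*6+9) * F (m+m+2) + q^(m*3+4) * G (m+m+2) := by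
      have h := hF (m+m+2)
      rw [show 3*(m+m+2)+3 = m*6+9 by ring, show (m*6+9)/2 = m*3+4 by omega,
        show m+m+2+1 = m+m+3 by omega] at h
      exact h
    have G3 : G (m+m+3) = q^(m*6+9) * G (m+m+2) + q^(m*3+5) * F (m+m+2) := by
      have h := hG (m+m+2)
      rw [show 3*(m+m+2)+3 = m*6+9 by ring, show 3*(m+m+2)+4 = m*6+10 by ring,
        show (m*6+10)/2 = m*3+5 by omega, show m+m+2+1 = m+m+3 by omega] at h
      exact h
    have F4 : F (m+m+4) = q^(m*6+12) * F (m+m+3) + q^(m*3+6) * G (m+m+3) := by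
      have h := hF (m+m+3)
      rw [show 3*(m+m+3)+3 = m*6+12 by ring, show (m*6+12)/2 = m*3+6 by omega,
        show m+m+3+1 = m+m+4 by omega] at h
      exact h
    rw [show 3*(m+m)+9 = m*6+9 by ring, show 3*(m+m)+10 = m*6+10 by ring,
      show 3*(m+m)+8 = m*6+8 by ring, show 6*(m+m)+15 = m*12+15 by ring,
      show 3*(m+m)+6 = m*6+6 by ring, show 3*(m+m)+3 = m*6+3 by ring]
    rw [F4, F3, G3, F2, G2, F1, G1]
    simp only [pow_add, pow_mul]
    ring
  · -- n = 2*m+1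
    have F1 : F (2*m+1+1) = q^(m*6+6) * F (2*m+1) + q^(m*3+3) * G (2*m+1) := by
      have h := hF (2*m+1)
      rw [show 3*(2*m+1)+3 = m*6+6 by ring, show (m*6+6)/2 = m*3+3 by omega] at h
      exact h
    have G1 : G (2*m+1+1) = q^(m*6+6) * G (2*m+1) + q^(m*3+3) * F (2*m+1) := by
      have h := hG (2*m+1)
      rw [show 3*(2*m+1)+3 = m*6+6 by ring, show 3*(2*m+1)+4 = m*6+7 by ring,
        show (m*6+7)/2 = m*3+3 by omega] at h
      exact h
    have F2 : F (2*m+1+2) = q^(m*6+9) * F (2*m+1+1) + q^(m*3+4) * G (2*m+1+1) := by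
      have h := hF (2*m+1+1)
      rw [show 3*(2*m+1+1)+3 = m*6+9 by ring, show (m*6+9)/2 = m*3+4 by omega,
        show 2*m+1+1+1 = 2*m+1+2 by omega] at h
      exact h
    have G2 : G (2*m+1+2) = q^(m*6+9) * G (2*m+1+1) + q^(m*3+5) * F (2*m+1+1) := by
      have h := hG (2*m+1+1)
      rw [show 3*(2*m+1+1)+3 = m*6+9 by ring, show 3*(2*m+1+1)+4 = m*6+10 by ring,
        show (m*6+10)/2 = m*3+5 by omega, show 2*m+1+1+1 = 2*m+1+2 by omega] at h
      exact h
    have F3 : F (2*m+1+3) = q^(m*6+12) * F (2*m+1+2) + q^(m*3+6) * G (2*m+1+2) := by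
      have h := hF (2*m+1+2)
      rw [show 3*(2*m+1+2)+3 = m*6+12 by ring, show (m*6+12)/2 = m*3+6 by omega,
        show 2*m+1+2+1 = 2*m+1+3 by omega] at h
      exact h
    have G3 : G (2*m+1+3) = q^(m*6+12) * G (2*m+1+2) + q^(m*3+6) * F (2*m+1+2) := by
      have h := hG (2*m+1+2)
      rw [show 3*(2*m+1+2)+3 = m*6+12 by ring, show 3*(2*m+1+2)+4 = m*6+13 by ring,
        show (m*6+13)/2 = m*3+6 by omega, show 2*m+1+2+1 = 2*m+1+3 by omega] at h
      exact h
    have F4 : F (2*m+1+4) = q^(m*6+15) * F (2*m+1+3) + q^(m*3+7) * G (2*m+1+3) := by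
      have h := hF (2*m+1+3)
      rw [show 3*(2*m+1+3)+3 = m*6+15 by ring, show (m*6+15)/2 = m*3+7 by omega,
        show 2*m+1+3+1 = 2*m+1+4 by omega] at h
      exact h
    rw [show 3*(2*m+1)+9 = m*6+12 by ring, show 3*(2*m+1)+10 = m*6+13 by ring,
      show 3*(2*m+1)+8 = m*6+11 by ring, show 6*(2*m+1)+15 = m*12+21 by ring,
      show 3*(2*m+1)+6 = m*6+9 by ring, show 3*(2*m+1)+3 = m*6+6 by ring]
    rw [F4, F3, G3, F2, G2, F1, G1]
    simp only [pow_add, pow_mul]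
    ring

end StrictPartition

open Polynomial
open StrictPartition

/-- **Fixed-length generating function, `i = 1`.**
For `|q| < 1` and the polynomial sequence `c = c^{(1)}` (indexed by `ℤ`) defined by
`c (-2) = c (-1) = 0`, `c 0 = 1`, `c 1 = q + q^3` and the fourth order recurrence below,
the series `∑_{λ ∈ STR, ℓ(λ) = n} q^{|λ|₁}` converges absolutely and equals
`c n (q) / (q³;q³)_n` for every `n ≥ 0`.
(For `n = 0` the last term of the recurrence vanishes because of the factor `1 - q^{3n}`,
so the truncated natural subtraction in the exponent `3*n - 3` is harmless.) -/
theorem fixed_length_generating_function_one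
    (q : ℂ) (hq : ‖q‖ < 1)
    (c : ℤ → Polynomial ℤ)
    (hcm2 : c (-2) = 0) (hcm1 : c (-1) = 0)
    (hc0 : c 0 = 1) (hc1 : c 1 = X + X ^ 3)
    (hrec : ∀ n : ℕ, c ((n : ℤ) + 2) =
      -X ^ (3 * n + 3) * (1 - X ^ 3) * c ((n : ℤ) + 1)
      + X ^ (3 * n + 4) * (1 + X + 2 * X ^ (3 * n + 2)) * c (n : ℤ)
      - X ^ (6 * n + 3) * (1 - X ^ 3) * (1 - X ^ (3 * n)) * c ((n : ℤ) - 1)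
      - X ^ (6 * n + 3) * (1 - X ^ (3 * n)) * (1 - X ^ (3 * n - 3)) * c ((n : ℤ) - 2)) :
    ∀ n : ℕ,
      Summable (fun p : {p : StrictPartition // p.length = n} => ‖(q : ℂ) ^ p.1.wt 1‖) ∧
      (∑' p : {p : StrictPartition // p.length = n}, q ^ p.1.wt 1) =
        (aeval q (c (n : ℤ))) / ∏ j ∈ Finset.range n, (1 - q ^ 3 * (q ^ 3) ^ j) := by
  set D : ℕ → ℂ := fun k => ∏ j ∈ Finset.range k, (1 - q ^ 3 * (q ^ 3) ^ j) with hDdef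
  -- the product factors are nonzero
  have hfac : ∀ j : ℕ, (1 : ℂ) - q ^ 3 * (q ^ 3) ^ j ≠ 0 := by
    intro j h
    have h1 : q ^ 3 * (q ^ 3) ^ j = 1 := by
      have := sub_eq_zero.mp h
      exact this.symm
    have h2 : ‖q ^ 3 * (q ^ 3) ^ j‖ = 1 := by rw [h1]; simp
    have h3 : ‖q ^ 3 * (q ^ 3) ^ j‖ < 1 := by
      rw [norm_mul, norm_pow, norm_pow, norm_pow, ← pow_mul, ← pow_add]
      exact pow_lt_one₀ (norm_nonneg q) hq (by omega)
    exact h3.ne h2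
  have hDne : ∀ k, D k ≠ 0 := by
    intro k
    rw [hDdef]
    exact Finset.prod_ne_zero_iff.mpr (fun j _ => hfac j)
  have hDsucc : ∀ k, D (k+1) = D k * (1 - q ^ (3*k+3)) := by
    intro k
    rw [hDdef]
    simp only [Finset.prod_range_succ]
    congr 2
    rw [← pow_mul, ← pow_add]
    congr 1
    ring
  have hab : ∀ k : ℕ, q ^ ((3*k+3)/2) * q ^ ((3*k+4)/2) = q ^ (3*k+3) := by
    intro k
    rw [← pow_add]
    congr 1
    omega
  -- coupled first-order recurrences for F k = SPsum q 1 k * D k, G k = SPsum q 2 k * D k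
  have hF : ∀ k, SPsum q 1 (k+1) * D (k+1)
      = q^(3*k+3) * (SPsum q 1 k * D k) + q^((3*k+3)/2) * (SPsum q 2 k * D k) := by
    intro k
    obtain ⟨h1, h2⟩ := SPsum_rec q hq k
    rw [show 3*(k+1) = 3*k+3 by ring] at h1 h2
    rw [show (3*k+3+1) = 3*k+4 by ring] at h2
    rw [hDsucc k]
    linear_combination (D k) * h1 + (q^((3*k+3)/2) * D k) * h2
      + (SPsum q 1 (k+1) + SPsum q 1 k) * D k * hab k
  have hG : ∀ k, SPsum q 2 (k+1) * D (k+1)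
      = q^(3*k+3) * (SPsum q 2 k * D k) + q^((3*k+4)/2) * (SPsum q 1 k * D k) := by
    intro k
    obtain ⟨h1, h2⟩ := SPsum_rec q hq k
    rw [show 3*(k+1) = 3*k+3 by ring] at h1 h2
    rw [show (3*k+3+1) = 3*k+4 by ring] at h2
    rw [hDsucc k]
    linear_combination (D k) * h2 + (q^((3*k+4)/2) * D k) * h1
      + (SPsum q 2 (k+1) + SPsum q 2 k) * D k * hab k
  -- main induction
  have main : ∀ N : ℕ, aeval q (c (N : ℤ)) = SPsum q 1 N * D N := by
    intro N
    induction N using Nat.strong_induction_on with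
    | _ N ih =>
      match N, ih with
      | 0, ih => simp [hc0, SPsum_zero, hDdef]
      | 1, ih =>
          have h := hF 0
          rw [SPsum_zero, SPsum_zero] at h
          have hD0 : D 0 = 1 := by rw [hDdef]; simp
          rw [hD0] at h
          norm_num at h
          rw [show ((1:ℕ):ℤ) = 1 by norm_num, hc1]
          simp only [map_add, map_pow, aeval_X]
          rw [h]
          ring
      | 2, ih =>
          have h := hrec 0
          rw [show ((0:ℕ):ℤ) + 2 = ((2:ℕ):ℤ) by norm_num,
            show ((0:ℕ):ℤ) + 1 = ((1:ℕ):ℤ) by norm_num,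
            show ((0:ℕ):ℤ) - 1 = (-1 : ℤ) by norm_num,
            show ((0:ℕ):ℤ) - 2 = (-2 : ℤ) by norm_num, hcm1, hcm2] at h
          have h' := congrArg (aeval q) h
          simp only [map_add, map_sub, map_mul, map_neg, map_pow, map_one, map_ofNat,
            aeval_X, map_zero, mul_zero, sub_zero] at h'
          rw [ih 0 (by omega), ih 1 (by omega)] at h'
          have hD0 : D 0 = 1 := by rw [hDdef]; simp
          have v1 : SPsum q 1 1 * D 1 = q^3 + q := by
            have k := hF 0; rw [SPsum_zero, SPsum_zero, hD0] at k; norm_num at k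
            rw [k]
          have v2 : SPsum q 2 1 * D 1 = q^3 + q^2 := by
            have k := hG 0; rw [SPsum_zero, SPsum_zero, hD0] at k; norm_num at k
            rw [k]
          have v21 : SPsum q 1 2 * D 2 = q^6*(q^3+q) + q^3*(q^3+q^2) := by
            have k := hF 1
            norm_num at k
            rw [k, v1, v2]
          rw [h', v21, v1, SPsum_zero, hD0]
          ring
      | 3, ih =>
          have h := hrec 1
          rw [show ((1:ℕ):ℤ) + 2 = ((3:ℕ):ℤ) by norm_num,
            show ((1:ℕ):ℤ) + 1 = ((2:ℕ):ℤ) by norm_num,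
            show ((1:ℕ):ℤ) - 1 = ((0:ℕ):ℤ) by norm_num,
            show ((1:ℕ):ℤ) - 2 = (-1 : ℤ) by norm_num, hcm1] at h
          have h' := congrArg (aeval q) h
          simp only [map_add, map_sub, map_mul, map_neg, map_pow, map_one, map_ofNat,
            aeval_X, map_zero, mul_zero, sub_zero] at h'
          rw [ih 0 (by omega), ih 1 (by omega), ih 2 (by omega)] at h'
          have hD0 : D 0 = 1 := by rw [hDdef]; simp
          have v1 : SPsum q 1 1 * D 1 = q^3 + q := by
            have k := hF 0; rw [SPsum_zero, SPsum_zero, hD0] at k; norm_num at k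
            rw [k]
          have v2 : SPsum q 2 1 * D 1 = q^3 + q^2 := by
            have k := hG 0; rw [SPsum_zero, SPsum_zero, hD0] at k; norm_num at k
            rw [k]
          have v21 : SPsum q 1 2 * D 2 = q^6*(q^3+q) + q^3*(q^3+q^2) := by
            have k := hF 1
            norm_num at k
            rw [k, v1, v2]
          have v22 : SPsum q 2 2 * D 2 = q^6*(q^3+q^2) + q^3*(q^3+q) := by
            have k := hG 1
            norm_num at k
            rw [k, v1, v2]
          have v31 : SPsum q 1 3 * D 3
              = q^9*(q^6*(q^3+q) + q^3*(q^3+q^2)) + q^4*(q^6*(q^3+q^2) + q^3*(q^3+q)) := by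
            have k := hF 2
            norm_num at k
            rw [k, v21, v22]
          rw [h', v31, v21, v1, SPsum_zero, hD0]
          ring
      | (M+4), ih =>
          have h := hrec (M+2)
          rw [show ((M+2:ℕ):ℤ) + 2 = ((M+4:ℕ):ℤ) by push_cast; ring,
            show ((M+2:ℕ):ℤ) + 1 = ((M+3:ℕ):ℤ) by push_cast; ring,
            show ((M+2:ℕ):ℤ) - 1 = ((M+1:ℕ):ℤ) by push_cast; ring,
            show ((M+2:ℕ):ℤ) - 2 = ((M:ℕ):ℤ) by push_cast; ring] at h
          rw [show 3*(M+2)+3 = 3*M+9 by ring, show 3*(M+2)+4 = 3*M+10 by ring,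
            show 3*(M+2)+2 = 3*M+8 by ring, show 6*(M+2)+3 = 6*M+15 by ring,
            show 3*(M+2)-3 = 3*M+3 by omega, show 3*(M+2) = 3*M+6 by ring] at h
          have h' := congrArg (aeval q) h
          simp only [map_add, map_sub, map_mul, map_neg, map_pow, map_one, map_ofNat,
            aeval_X] at h'
          rw [ih (M+3) (by omega), ih (M+2) (by omega), ih (M+1) (by omega),
            ih M (by omega)] at h'
          rw [h']
          exact (fourterm (F := fun k => SPsum q 1 k * D k)
            (G := fun k => SPsum q 2 k * D k) hF hG M).symm
  intro n
  refine ⟨summable_norm_wt hq 1 n, ?_⟩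
  rw [eq_div_iff (hDne n)]
  exact (main n).symm
end

section
/- Let q be a complex number with |q| < 1. For every integer n ≥ 0, the series ∑_{λ ∈ STR, ℓ(λ) = n} q^{|λ|_2} over all strict partitions with exactly n parts converges absolutely and equals c^{(2)}_n(q)/(q^3;q^3)_n, where c^{(2)}_n is the polynomial sequence defined in the context with i = 2. -/
open Polynomial

namespace GLF2

/-! ### The algebraic side: a 2×2 transfer recursion -/

def gam (n : ℕ) : ℕ := if n % 2 = 0 then 2 else 1

noncomputable def uu (q : ℂ) : ℕ → ℂ × ℂ
  | 0 => (0, 1)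
  | n+1 => (q ^ (3*n + gam n) * (uu q n).1 + q ^ gam n * (uu q n).2,
            q ^ (3*n+3) * ((uu q n).1 + (uu q n).2))

noncomputable def dd (q : ℂ) (n : ℕ) : ℂ := (uu q n).1 + (uu q n).2

lemma uu_succ (q : ℂ) (n : ℕ) : uu q (n+1) =
    (q ^ (3*n + gam n) * (uu q n).1 + q ^ gam n * (uu q n).2,
     q ^ (3*n+3) * ((uu q n).1 + (uu q n).2)) := rfl

lemma gam_even {n : ℕ} (h : n % 2 = 0) : gam n = 2 := if_pos h
lemma gam_odd {n : ℕ} (h : n % 2 = 1) : gam n = 1 := by simp [gam, h]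

theorem aeval_c_eq_dd (q : ℂ)
    (c : ℤ → Polynomial ℤ)
    (hcm2 : c (-2) = 0) (hcm1 : c (-1) = 0)
    (hc0 : c 0 = 1) (hc1 : c 1 = X ^ 2 + X ^ 3)
    (hrec : ∀ n : ℕ, c ((n : ℤ) + 2) =
      -X ^ (3 * n + 3) * (1 - X ^ 3) * c ((n : ℤ) + 1)
      + X ^ (3 * n + 4) * (1 + X + 2 * X ^ (3 * n + 2)) * c (n : ℤ)
      - X ^ (6 * n + 3) * (1 - X ^ 3) * (1 - X ^ (3 * n)) * c ((n : ℤ) - 1)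
      - X ^ (6 * n + 3) * (1 - X ^ (3 * n)) * (1 - X ^ (3 * n - 3)) * c ((n : ℤ) - 2)) :
    ∀ n : ℕ, aeval q (c (n : ℤ)) = dd q n := by
  have p0 : aeval q (c ((0:ℕ) : ℤ)) = dd q 0 := by
    norm_num [hc0, dd, uu]
  have p1 : aeval q (c ((1:ℕ) : ℤ)) = dd q 1 := by
    norm_num [hc1, dd, uu, gam]
  have p2 : aeval q (c ((2:ℕ) : ℤ)) = dd q 2 := by
    have h := hrec 0
    norm_num [hcm1, hcm2, hc0, hc1] at h ⊢
    rw [h]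
    simp only [map_add, map_sub, map_mul, map_neg, map_pow, map_one, map_ofNat, aeval_X]
    norm_num [dd, uu, gam]
    ring
  have p3 : aeval q (c ((3:ℕ) : ℤ)) = dd q 3 := by
    have h := hrec 1
    have e1 : ((1:ℕ) : ℤ) + 2 = ((3:ℕ) : ℤ) := by norm_num
    have e2 : ((1:ℕ) : ℤ) + 1 = ((2:ℕ) : ℤ) := by norm_num
    have e3 : ((1:ℕ) : ℤ) - 1 = ((0:ℕ) : ℤ) := by norm_num
    have e4 : ((1:ℕ) : ℤ) - 2 = (-1 : ℤ) := by norm_num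
    rw [e1, e2, e3, e4, hcm1] at h
    have h2 := congrArg (aeval q) h
    simp only [map_add, map_sub, map_mul, map_neg, map_pow, map_one, map_ofNat, aeval_X,
      map_zero, mul_zero] at h2
    rw [p2, p0, p1] at h2
    rw [h2]
    norm_num [dd, uu, gam]
    ring
  have step : ∀ m : ℕ, aeval q (c ((m:ℕ) : ℤ)) = dd q m →
      aeval q (c ((m+1 :ℕ) : ℤ)) = dd q (m+1) →
      aeval q (c ((m+2 :ℕ) : ℤ)) = dd q (m+2) →
      aeval q (c ((m+3 :ℕ) : ℤ)) = dd q (m+3) →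
      aeval q (c ((m+4 :ℕ) : ℤ)) = dd q (m+4) := by
    intro m i0 i1 i2 i3
    have h := hrec (m+2)
    have e1 : ((m+2:ℕ) : ℤ) + 2 = ((m+4:ℕ) : ℤ) := by push_cast; ring
    have e2 : ((m+2:ℕ) : ℤ) + 1 = ((m+3:ℕ) : ℤ) := by push_cast; ring
    have e3 : ((m+2:ℕ) : ℤ) - 1 = ((m+1:ℕ) : ℤ) := by push_cast; ring
    have e4 : ((m+2:ℕ) : ℤ) - 2 = ((m:ℕ) : ℤ) := by push_cast; ring
    have e5 : 3*(m+2) - 3 = 3*m+3 := by omega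
    rw [e1, e2, e3, e4, e5] at h
    have h2 := congrArg (aeval q) h
    simp only [map_add, map_sub, map_mul, map_neg, map_pow, map_one, map_ofNat, aeval_X] at h2
    rw [i0, i1, i2, i3] at h2
    rw [h2]
    have u1 : uu q (m+1) = (q ^ (3*m + gam m) * (uu q m).1 + q ^ gam m * (uu q m).2,
      q ^ (3*m+3) * ((uu q m).1 + (uu q m).2)) := uu_succ q m
    have u2 : uu q (m+2) = (q ^ (3*(m+1) + gam (m+1)) * (uu q (m+1)).1 + q ^ gam (m+1) * (uu q (m+1)).2,
      q ^ (3*(m+1)+3) * ((uu q (m+1)).1 + (uu q (m+1)).2)) := uu_succ q (m+1)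
    have u3 : uu q (m+3) = (q ^ (3*(m+2) + gam (m+2)) * (uu q (m+2)).1 + q ^ gam (m+2) * (uu q (m+2)).2,
      q ^ (3*(m+2)+3) * ((uu q (m+2)).1 + (uu q (m+2)).2)) := uu_succ q (m+2)
    have u4 : uu q (m+4) = (q ^ (3*(m+3) + gam (m+3)) * (uu q (m+3)).1 + q ^ gam (m+3) * (uu q (m+3)).2,
      q ^ (3*(m+3)+3) * ((uu q (m+3)).1 + (uu q (m+3)).2)) := uu_succ q (m+3)
    rcases Nat.even_or_odd m with hm | hm
    · have hm0 : m % 2 = 0 := Nat.even_iff.mp hm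
      have g0 : gam m = 2 := gam_even hm0
      have g1 : gam (m+1) = 1 := gam_odd (by omega)
      have g2 : gam (m+2) = 2 := gam_even (by omega)
      have g3 : gam (m+3) = 1 := gam_odd (by omega)
      simp only [dd, u4, u3, u2, u1, g0, g1, g2, g3]
      ring
    · have hm0 : m % 2 = 1 := Nat.odd_iff.mp hm
      have g0 : gam m = 1 := gam_odd hm0
      have g1 : gam (m+1) = 2 := gam_even (by omega)
      have g2 : gam (m+2) = 1 := gam_odd (by omega)
      have g3 : gam (m+3) = 2 := gam_even (by omega)
      simp only [dd, u4, u3, u2, u1, g0, g1, g2, g3]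
      ring
  have main : ∀ m : ℕ, aeval q (c ((m:ℕ) : ℤ)) = dd q m ∧
      aeval q (c ((m+1 :ℕ) : ℤ)) = dd q (m+1) ∧
      aeval q (c ((m+2 :ℕ) : ℤ)) = dd q (m+2) ∧
      aeval q (c ((m+3 :ℕ) : ℤ)) = dd q (m+3) := by
    intro m
    induction m with
    | zero => exact ⟨p0, p1, p2, p3⟩
    | succ k ih => exact ⟨ih.2.1, ih.2.2.1, ih.2.2.2,
        step k ih.1 ih.2.1 ih.2.2.1 ih.2.2.2⟩
  exact fun n => (main n).1

/-! ### The combinatorial side: encoding strict partitions bottom-up -/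

open StrictPartition

def wtl (P : List ℕ) : ℕ :=
  P.sum + ∑ j ∈ Finset.range P.length, rowResidueCount 2 j (P.getD j 0)

lemma wt_eq_wtl (l : StrictPartition) : l.wt 2 = wtl l.parts := rfl

lemma list_sum_eq (P : List ℕ) : P.sum = ∑ j ∈ Finset.range P.length, P.getD j 0 := by
  induction P with
  | nil => simp
  | cons x P ih =>
    rw [List.sum_cons, List.length_cons, Finset.sum_range_succ']
    simp only [List.getD_cons_succ, List.getD_cons_zero, ih]
    ring

lemma wtl_eq (P : List ℕ) :
    wtl P = ∑ j ∈ Finset.range P.length,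
      (P.getD j 0 + rowResidueCount 2 j (P.getD j 0)) := by
  rw [wtl, list_sum_eq, ← Finset.sum_add_distrib]

lemma rrc_eq (j p : ℕ) : rowResidueCount 2 j p = (p + (j+1) % 2) / 2 := by
  induction p with
  | zero =>
    have : Finset.Icc 1 0 = (∅ : Finset ℕ) := by simp
    rw [rowResidueCount, this]
    simp
  | succ p ih =>
    have hins : Finset.Icc 1 (p+1) = insert (p+1) (Finset.Icc 1 p) := by
      ext k; simp [Finset.mem_Icc]; omega
    have hnot : (p+1) ∉ Finset.Icc 1 p := by simp
    have hdef : (Finset.filter (fun k => (k + j + 1 + 2) % 2 = 0) (Finset.Icc 1 p)).card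
        = rowResidueCount 2 j p := rfl
    rw [rowResidueCount, hins, Finset.filter_insert]
    split_ifs with hc
    · rw [Finset.card_insert_of_notMem (fun h => hnot (Finset.mem_filter.mp h).1), hdef, ih]
      omega
    · rw [hdef, ih]
      omega

def headb (L : List (Bool × ℕ)) : Bool := (L.headD (false,0)).1
def dB (b : Bool) : ℕ := cond b 0 1
def adj (h b : Bool) : ℕ := cond (h && b) 1 0

def wB : List (Bool × ℕ) → ℕ
  | [] => 0
  | (b,m) :: L => wB L + 3*(L.length+1)*(m + dB b) + (cond b (gam L.length) 0)
      + 3*L.length*(adj (headb L) b)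

def shiftOf (b : Bool) (m : ℕ) (L : List (Bool × ℕ)) : ℕ := 2*(m + dB b + adj (headb L) b)

def partsR : List (Bool × ℕ) → List ℕ
  | [] => []
  | (b,m) :: L => (2*(m + dB b) + b.toNat) :: (partsR L).map (· + shiftOf b m L)

def decR : List ℕ → List (Bool × ℕ)
  | [] => []
  | p :: P =>
      (decide (p % 2 = 1), p / 2 - dB (decide (p % 2 = 1))) ::
        decR (P.map (fun x =>
          x - (2*(p/2) + 2 * adj (decide ((P.headD 0) % 2 = 1)) (decide (p % 2 = 1)))))
  termination_by P => P.length
  decreasing_by simp only [List.length_map, List.length_cons, List.length_attach]; omega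

lemma length_partsR (L : List (Bool × ℕ)) : (partsR L).length = L.length := by
  induction L with
  | nil => rfl
  | cons x L ih => obtain ⟨b, m⟩ := x; simp [partsR, ih]

lemma length_decR_aux : ∀ n (P : List ℕ), P.length ≤ n → (decR P).length = P.length := by
  intro n
  induction n with
  | zero => intro P hP; rw [List.length_eq_zero_iff.mp (Nat.le_zero.mp hP)]; simp [decR]
  | succ n ih =>
    intro P hP
    match P with
    | [] => simp [decR]
    | p :: P' =>
      simp only [decR, List.length_cons]
      rw [ih _ (by simpa using Nat.succ_le_succ_iff.mp hP)]
      simp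

lemma length_decR (P : List ℕ) : (decR P).length = P.length :=
  length_decR_aux P.length P le_rfl

lemma headD_partsR_mod (L : List (Bool × ℕ)) :
    ((partsR L).headD 0) % 2 = (headb L).toNat := by
  cases L with
  | nil => rfl
  | cons x L =>
    obtain ⟨b, m⟩ := x
    cases b <;> simp [partsR, headb, dB] <;> omega

lemma sorted_head_le {P : List ℕ} (h : P.Pairwise (· < ·)) : ∀ x ∈ P, P.headD 0 ≤ x := by
  cases P with
  | nil => intro x hx; simp at hx
  | cons a t =>
    intro x hx
    rcases List.mem_cons.mp hx with rfl | hx'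
    · simp
    · exact le_of_lt ((List.pairwise_cons.mp h).1 x hx')

lemma partsR_sorted_pos (L : List (Bool × ℕ)) :
    ((partsR L).Pairwise (· < ·)) ∧ ∀ x ∈ partsR L, 0 < x := by
  induction L with
  | nil => constructor <;> simp [partsR]
  | cons x L ih =>
    obtain ⟨b, m⟩ := x
    obtain ⟨ihs, ihp⟩ := ih
    constructor
    · rw [partsR, List.pairwise_cons]
      constructor
      · intro y hy
        obtain ⟨z, hz, rfl⟩ := List.mem_map.mp hy
        have hzpos := ihp z hz
        cases hb : b
        · simp [shiftOf, dB, adj]; omega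
        · cases hh : headb L
          · have h1 := headD_partsR_mod L
            rw [hh] at h1
            have h2 := sorted_head_le ihs z hz
            have h3 : 0 < (partsR L).headD 0 := by
              rcases hP : partsR L with _ | ⟨h0, t0⟩
              · rw [hP] at hz; simp at hz
              · simp only [List.headD_cons]
                exact ihp h0 (by rw [hP]; simp)
            simp only [shiftOf, dB, adj, hh, Bool.false_and, cond_false, cond_true, Bool.toNat_true]
            simp only [Bool.toNat_false] at h1
            omega
          · simp [shiftOf, dB, adj, hh]
            omega
      · exact List.pairwise_map.mpr (List.Pairwise.imp (fun h => by omega) ihs)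
    · intro y hy
      rw [partsR] at hy
      rcases List.mem_cons.mp hy with rfl | hy'
      · cases b <;> simp [dB]
      · obtain ⟨z, hz, rfl⟩ := List.mem_map.mp hy'
        have := ihp z hz; omega

lemma headD_map_sub_even (P : List ℕ) (s : ℕ) (hs : s % 2 = 0)
    (hle : ∀ x ∈ P, s ≤ x) :
    ((P.map (fun x => x - s)).headD 0) % 2 = (P.headD 0) % 2 := by
  cases P with
  | nil => rfl
  | cons a t =>
    have := hle a (by simp)
    simp only [List.map_cons, List.headD_cons]
    omega

lemma headD_map_add_even (P : List ℕ) (s : ℕ) (hs : s % 2 = 0) :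
    ((P.map (· + s)).headD 0) % 2 = (P.headD 0) % 2 := by
  cases P with
  | nil => rfl
  | cons a t => simp only [List.map_cons, List.headD_cons]; omega

lemma decR_partsR : ∀ L, decR (partsR L) = L := by
  intro L
  induction L with
  | nil => simp [partsR, decR]
  | cons x L ih =>
    obtain ⟨b, m⟩ := x
    rw [partsR]
    simp only [decR]
    have hsh : shiftOf b m L % 2 = 0 := by simp [shiftOf]
    have hb : decide ((2*(m + dB b) + b.toNat) % 2 = 1) = b := by
      cases b <;> simp [dB] <;> omega
    have hhead : decide ((((partsR L).map (· + shiftOf b m L)).headD 0) % 2 = 1) = headb L := by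
      rw [headD_map_add_even _ _ hsh, headD_partsR_mod]
      cases headb L <;> simp
    rw [hb, hhead]
    have hm : (2*(m + dB b) + b.toNat) / 2 - dB b = m := by
      cases b <;> simp [dB] <;> omega
    have hs' : 2*((2*(m + dB b) + b.toNat)/2) + 2 * adj (headb L) b = shiftOf b m L := by
      have h2 : (2*(m + dB b) + b.toNat)/2 = m + dB b := by cases b <;> simp [dB] <;> omega
      rw [h2, shiftOf]
      ring
    rw [hm, hs']
    rw [List.map_map]
    have : ((fun x => x - shiftOf b m L) ∘ (· + shiftOf b m L)) = id := by
      funext x; simp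
    rw [this, List.map_id, ih]

lemma headb_decR (P : List ℕ) : headb (decR P) = decide ((P.headD 0) % 2 = 1) := by
  cases P with
  | nil => simp [decR, headb]
  | cons p P' => simp [decR, headb, List.headD_cons]

lemma partsR_decR_aux : ∀ n (P : List ℕ), P.length ≤ n → P.Pairwise (· < ·) →
    (∀ x ∈ P, 0 < x) → partsR (decR P) = P := by
  intro n
  induction n with
  | zero => intro P hP _ _; rw [List.length_eq_zero_iff.mp (Nat.le_zero.mp hP)]; simp [decR, partsR]
  | succ n ih =>
    intro P hP hsort hpos
    cases P with
    | nil => simp [decR, partsR]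
    | cons p P' =>
      obtain ⟨hall, hsort'⟩ := List.pairwise_cons.mp hsort
      have hp : 0 < p := hpos p (by simp)
      simp only [decR]
      set b := decide (p % 2 = 1) with hbdef
      set s := 2*(p/2) + 2 * adj (decide ((P'.headD 0) % 2 = 1)) b with hsdef
      have hs_even : s % 2 = 0 := by rw [hsdef]; omega
      have hkey : ∀ x ∈ P', s < x := by
        intro x hx
        have hpx : p < x := hall x hx
        have hhd : P'.headD 0 ≤ x := sorted_head_le hsort' x hx
        have hph : p < P'.headD 0 := by
          cases P' with
          | nil => simp at hx
          | cons h0 t0 => simpa using hall h0 (by simp)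
        cases hh : decide ((P'.headD 0) % 2 = 1) with
        | false =>
          have hs0 : s = 2*(p/2) := by rw [hsdef, hh]; simp [adj]
          omega
        | true =>
          cases hb2 : b with
          | false =>
            have hs0 : s = 2*(p/2) := by rw [hsdef, hh, hb2]; simp [adj]
            omega
          | true =>
            have hs1 : s = 2*(p/2) + 2 := by rw [hsdef, hh, hb2]; simp [adj]
            have hpodd : p % 2 = 1 := by
              rw [hbdef] at hb2; exact of_decide_eq_true hb2
            have hhodd : (P'.headD 0) % 2 = 1 := of_decide_eq_true hh
            omega
      have hsub_pos : ∀ y ∈ P'.map (fun x => x - s), 0 < y := by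
        intro y hy
        obtain ⟨z, hz, rfl⟩ := List.mem_map.mp hy
        have := hkey z hz; omega
      have hsub_sorted : (P'.map (fun x => x - s)).Pairwise (· < ·) := by
        apply List.pairwise_map.mpr
        apply List.Pairwise.imp_of_mem (fun {x y} hx _ hxy => ?_) hsort'
        have := hkey x hx
        omega
      have hlen : (P'.map (fun x => x - s)).length ≤ n := by
        simp only [List.length_map]
        simpa using Nat.succ_le_succ_iff.mp hP
      have ihP := ih _ hlen hsub_sorted hsub_pos
      rw [partsR, ihP]
      have hd2 : p / 2 - dB b + dB b = p / 2 := by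
        rcases Nat.mod_two_eq_zero_or_one p with hpar | hpar <;>
          · rw [hbdef]; simp [dB, hpar]
            try omega
      have hhb : headb (decR (P'.map (fun x => x - s))) = decide ((P'.headD 0) % 2 = 1) := by
        rw [headb_decR, headD_map_sub_even _ _ hs_even (fun x hx => le_of_lt (hkey x hx))]
      have hshift : shiftOf b (p / 2 - dB b) (decR (P'.map (fun x => x - s))) = s := by
        rw [shiftOf, hd2, hhb, hsdef]; ring
      have hhead : 2*(p / 2 - dB b + dB b) + b.toNat = p := by
        rw [hd2]
        rcases Nat.mod_two_eq_zero_or_one p with hpar | hpar <;>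
          · rw [hbdef]; simp [hpar]
            try omega
      rw [hshift, hhead, List.map_map]
      congr 1
      have : ∀ x ∈ P', ((· + s) ∘ fun x => x - s) x = id x := by
        intro x hx
        have := hkey x hx
        simp; omega
      rw [List.map_congr_left this, List.map_id]

lemma partsR_decR (P : List ℕ) (hsort : P.Pairwise (· < ·)) (hpos : ∀ x ∈ P, 0 < x) :
    partsR (decR P) = P :=
  partsR_decR_aux P.length P le_rfl hsort hpos

/-! ### the weight identity -/

lemma wtl_append (P : List ℕ) (p : ℕ) :
    wtl (P ++ [p]) = wtl P + (p + rowResidueCount 2 P.length p) := by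
  rw [wtl_eq, wtl_eq, List.length_append, List.length_singleton, Finset.sum_range_succ]
  congr 1
  · apply Finset.sum_congr rfl
    intro j hj
    have hj' : j < P.length := Finset.mem_range.mp hj
    rw [List.getD_append _ _ _ _ hj']
  · rw [List.getD_append_right _ _ _ _ le_rfl, Nat.sub_self, List.getD_cons_zero]

lemma wtl_map_shift (P : List ℕ) (t : ℕ) :
    wtl (P.map (· + 2*t)) = wtl P + P.length * (3*t) := by
  rw [wtl_eq, wtl_eq, List.length_map]
  have h : ∀ j ∈ Finset.range P.length,
      ((P.map (· + 2*t)).getD j 0 + rowResidueCount 2 j ((P.map (· + 2*t)).getD j 0))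
      = (P.getD j 0 + rowResidueCount 2 j (P.getD j 0)) + 3*t := by
    intro j hj
    have hj' : j < P.length := Finset.mem_range.mp hj
    have hj'' : j < (P.map (· + 2*t)).length := by simpa using hj'
    rw [List.getD_eq_getElem _ _ hj'', List.getElem_map, List.getD_eq_getElem _ _ hj']
    rw [rrc_eq, rrc_eq]
    omega
  rw [Finset.sum_congr rfl h, Finset.sum_add_distrib, Finset.sum_const, Finset.card_range,
    smul_eq_mul]

lemma wtP (L : List (Bool × ℕ)) : wtl ((partsR L).reverse) = wB L := by
  induction L with
  | nil => rfl
  | cons x L ih =>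
    obtain ⟨b, m⟩ := x
    rw [partsR, List.reverse_cons]
    have hmr : ((partsR L).map (· + shiftOf b m L)).reverse
        = ((partsR L).reverse).map (· + shiftOf b m L) := List.map_reverse.symm
    rw [hmr]
    rw [wtl_append]
    have hlen : ((partsR L).reverse.map (· + shiftOf b m L)).length = L.length := by
      simp [length_partsR]
    rw [hlen]
    have hsh : shiftOf b m L = 2 * (m + dB b + adj (headb L) b) := rfl
    rw [hsh, wtl_map_shift, ih]
    have hrlen : (partsR L).reverse.length = L.length := by simp [length_partsR]
    rw [hrlen]
    have hnew : 2*(m + dB b) + b.toNat + rowResidueCount 2 L.length (2*(m + dB b) + b.toNat)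
        = 3*(m + dB b) + cond b (gam L.length) 0 := by
      rw [rrc_eq]
      rcases Nat.mod_two_eq_zero_or_one L.length with hpar | hpar <;> cases b <;>
        · simp [dB, gam, hpar]; omega
    rw [hnew, wB]
    ring

/-! ### the bijection with strict partitions -/

def toSP (L : List (Bool × ℕ)) : StrictPartition where
  parts := (partsR L).reverse
  sorted := List.pairwise_reverse.mpr (partsR_sorted_pos L).1
  pos := fun p hp => (partsR_sorted_pos L).2 p (List.mem_reverse.mp hp)

lemma sp_ext {p q : StrictPartition} (h : p.parts = q.parts) : p = q := by
  cases p; cases q; simp_all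

abbrev SLn (n : ℕ) := {l : List (Bool × ℕ) // l.length = n}
abbrev SPn (n : ℕ) := {p : StrictPartition // p.length = n}

def eqv (n : ℕ) : SLn n ≃ SPn n where
  toFun L := ⟨toSP L.1, by
    simp [StrictPartition.length, toSP, length_partsR, L.2]⟩
  invFun P := ⟨decR P.1.parts.reverse, by
    rw [length_decR, List.length_reverse]; exact P.2⟩
  left_inv L := Subtype.ext (by
    simp only [toSP, List.reverse_reverse]
    exact decR_partsR L.1)
  right_inv P := Subtype.ext (by
    apply sp_ext
    show (partsR (decR P.1.parts.reverse)).reverse = P.1.parts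
    have hsort : P.1.parts.reverse.Pairwise (· < ·) := List.pairwise_reverse.mpr P.1.sorted
    have hpos : ∀ x ∈ P.1.parts.reverse, 0 < x := fun x hx =>
      P.1.pos x (List.mem_reverse.mp hx)
    rw [partsR_decR _ hsort hpos, List.reverse_reverse])

lemma wt_toSP (L : List (Bool × ℕ)) : (toSP L).wt 2 = wB L := by
  rw [wt_eq_wtl]
  exact wtP L

lemma wt_eqv {n : ℕ} (L : SLn n) : ((eqv n) L).1.wt 2 = wB L.1 := wt_toSP L.1

/-! ### cons equivalence on fixed-length lists -/

def consEquiv (n : ℕ) : (Bool × ℕ) × SLn n ≃ SLn (n+1) where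
  toFun x := ⟨x.1 :: x.2.1, by simp [x.2.2]⟩
  invFun y :=
    match y with
    | ⟨[], h⟩ => absurd h (by simp)
    | ⟨a :: l, h⟩ => (a, ⟨l, by simpa using h⟩)
  left_inv := by rintro ⟨a, ⟨l, h⟩⟩; rfl
  right_inv := by
    rintro ⟨l, h⟩
    cases l with
    | nil => simp at h
    | cons a l => rfl

lemma wB_cons {n : ℕ} (b : Bool) (m : ℕ) (L : SLn n) :
    wB ((b, m) :: L.1) = wB L.1 + 3*(n+1)*(m + dB b) + (cond b (gam n) 0)
      + 3*n*(adj (headb L.1) b) := by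
  rw [wB, L.2]

lemma wB_cons' {n : ℕ} (b : Bool) (m : ℕ) (L : SLn n) :
    wB ((b, m) :: L.1) = 3*(n+1)*m + (wB L.1 + 3*(n+1)*(dB b) + (cond b (gam n) 0)
      + 3*n*(adj (headb L.1) b)) := by
  rw [wB, L.2]; ring

/-! ### the analytic induction -/

set_option maxHeartbeats 2000000 in
theorem keyB (q : ℂ) (hq : ‖q‖ < 1) : ∀ n : ℕ,
    Summable (fun x : SLn n => ‖q‖ ^ wB x.1) ∧
    (∑' x : SLn n, (if headb x.1 = true then q ^ wB x.1 else 0))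
      = (uu q n).1 * ∏ j ∈ Finset.range n, (1 - q ^ (3*(j+1)))⁻¹ ∧
    (∑' x : SLn n, (if headb x.1 = true then 0 else q ^ wB x.1))
      = (uu q n).2 * ∏ j ∈ Finset.range n, (1 - q ^ (3*(j+1)))⁻¹ := by
  have hq1 : ‖q‖ ≤ 1 := le_of_lt hq
  intro n
  induction n with
  | zero =>
    haveI hsub : Subsingleton (SLn 0) := ⟨by
      rintro ⟨l, hl⟩ ⟨l', hl'⟩
      rw [List.length_eq_zero_iff] at hl hl'
      subst hl; subst hl'; rfl⟩
    haveI : Fintype (SLn 0) := Fintype.ofSubsingleton (⟨[], rfl⟩ : SLn 0)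
    refine ⟨(hasSum_fintype _).summable, ?_, ?_⟩
    · rw [tsum_eq_single (⟨[], rfl⟩ : SLn 0) (fun b hb => absurd (Subsingleton.elim b _) hb)]
      simp [headb, uu]
    · rw [tsum_eq_single (⟨[], rfl⟩ : SLn 0) (fun b hb => absurd (Subsingleton.elim b _) hb)]
      simp [headb, wB, uu]
  | succ n ih =>
    obtain ⟨ihS, ihA, ihB⟩ := ih
    have hrn : ‖q ^ (3*(n+1))‖ < 1 := by
      rw [norm_pow]; exact pow_lt_one₀ (norm_nonneg q) hq (by omega)
    have hrr0 : (0:ℝ) ≤ ‖q‖ ^ (3*(n+1)) := pow_nonneg (norm_nonneg q) _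
    have hrr1 : ‖q‖ ^ (3*(n+1)) < 1 := pow_lt_one₀ (norm_nonneg q) hq (by omega)
    have hgeoR : Summable (fun k : ℕ => (‖q‖ ^ (3*(n+1))) ^ k) :=
      summable_geometric_of_lt_one hrr0 hrr1
    -- summability of complex pieces at level n
    have sumA : Summable (fun L : SLn n => if headb L.1 = true then q ^ wB L.1 else 0) := by
      apply Summable.of_norm_bounded ihS
      intro L
      cases hh : headb L.1 <;> simp [hh, norm_pow] <;> positivity
    have sumB : Summable (fun L : SLn n => if headb L.1 = true then 0 else q ^ wB L.1) := by
      apply Summable.of_norm_bounded ihS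
      intro L
      cases hh : headb L.1 <;> simp [hh, norm_pow] <;> positivity
    -- the norm bound for cons
    have hbound : ∀ (b : Bool) (m : ℕ) (L : SLn n),
        ‖q‖ ^ wB ((b, m) :: L.1) ≤ (‖q‖ ^ (3*(n+1)))^m * ‖q‖ ^ wB L.1 := by
      intro b m L
      rw [wB_cons' b m L, pow_add, pow_mul]
      apply mul_le_mul_of_nonneg_left ?_ (pow_nonneg hrr0 m)
      exact pow_le_pow_of_le_one (norm_nonneg q) hq1
        (((Nat.le_add_right _ _).trans (Nat.le_add_right _ _)).trans (Nat.le_add_right _ _))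
    -- summability at level n+1
    have hS1 : Summable (fun z : (Bool × ℕ) × SLn n =>
        ((‖q‖ ^ (3*(n+1))) ^ z.1.2) * ‖q‖ ^ wB z.2.1) := by
      have h1 : Summable (fun bm : Bool × ℕ => (‖q‖ ^ (3*(n+1))) ^ bm.2) := by
        have h2 := Summable.mul_of_nonneg ((hasSum_fintype (fun _ : Bool => (1:ℝ))).summable)
          hgeoR (fun _ => zero_le_one) (fun k => pow_nonneg hrr0 k)
        simpa using h2
      exact Summable.mul_of_nonneg h1 ihS (fun bm => pow_nonneg hrr0 _)
        (fun L => pow_nonneg (norm_nonneg q) _)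
    have hSnew : Summable (fun x : SLn (n+1) => ‖q‖ ^ wB x.1) := by
      rw [← (consEquiv n).summable_iff]
      apply Summable.of_nonneg_of_le (fun z => pow_nonneg (norm_nonneg q) _) ?_ hS1
      rintro ⟨⟨b, m⟩, L⟩
      exact hbound b m L
    refine ⟨hSnew, ?_, ?_⟩
    · -- the "head true" sum
      have e1 : (∑' x : SLn (n+1), (if headb x.1 = true then q ^ wB x.1 else 0))
          = ∑' z : (Bool × ℕ) × SLn n, (if z.1.1 = true then q ^ wB (z.1 :: z.2.1) else 0) := by
        rw [← (consEquiv n).tsum_eq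
          (fun x : SLn (n+1) => if headb x.1 = true then q ^ wB x.1 else 0)]
        exact tsum_congr (fun z => rfl)
      have e2 : (∑' z : (Bool × ℕ) × SLn n, (if z.1.1 = true then q ^ wB (z.1 :: z.2.1) else 0))
          = ∑' w : ℕ × SLn n, q ^ wB ((true, w.1) :: w.2.1) := by
        have hinj : Function.Injective (fun w : ℕ × SLn n => (((true, w.1), w.2) : (Bool × ℕ) × SLn n)) := by
          intro a b h
          simp only [Prod.mk.injEq] at h
          exact Prod.ext h.1.2 h.2
        have hsupp : Function.support (fun z : (Bool × ℕ) × SLn n =>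
            (if z.1.1 = true then q ^ wB (z.1 :: z.2.1) else 0))
            ⊆ Set.range (fun w : ℕ × SLn n => (((true, w.1), w.2) : (Bool × ℕ) × SLn n)) := by
          rintro ⟨⟨b, m⟩, L⟩ hz
          cases b
          · exfalso; apply hz; simp
          · exact ⟨(m, L), rfl⟩
        rw [← Function.Injective.tsum_eq hinj hsupp]
        exact tsum_congr (fun w => by simp)
      have hpoint : ∀ (m : ℕ) (L : SLn n), q ^ wB ((true, m) :: L.1)
          = (q ^ (3*(n+1)))^m * (q ^ gam n *
            (if headb L.1 = true then q ^ (3*n) * q ^ wB L.1 else q ^ wB L.1)) := by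
        intro m L
        cases hh : headb L.1
        · have he : wB ((true, m) :: L.1) = 3*(n+1)*m + (gam n + wB L.1) := by
            rw [wB_cons]
            simp [dB, adj, hh]
            try ring
          rw [he, pow_add, pow_mul, pow_add]
          simp
        · have he : wB ((true, m) :: L.1) = 3*(n+1)*m + (gam n + (3*n + wB L.1)) := by
            rw [wB_cons]
            simp [dB, adj, hh]
            try ring
          rw [he, pow_add, pow_mul, pow_add, pow_add]
          simp
      have e3 : (∑' w : ℕ × SLn n, q ^ wB ((true, w.1) :: w.2.1))
          = ∑' w : ℕ × SLn n, (q ^ (3*(n+1)))^w.1 * (q ^ gam n *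
              (if headb w.2.1 = true then q ^ (3*n) * q ^ wB w.2.1 else q ^ wB w.2.1)) :=
        tsum_congr (fun w => hpoint w.1 w.2)
      have hfn : Summable (fun k : ℕ => ‖(q ^ (3*(n+1)))^k‖) := by
        simpa [norm_pow] using hgeoR
      have hgle : ∀ L : SLn n, ‖q ^ gam n *
          (if headb L.1 = true then q ^ (3*n) * q ^ wB L.1 else q ^ wB L.1)‖ ≤ ‖q‖ ^ wB L.1 := by
        intro L
        cases hh : headb L.1
        · rw [if_neg (by decide : ¬(false = true)), ← pow_add, norm_pow]
          exact pow_le_pow_of_le_one (norm_nonneg q) hq1 (Nat.le_add_left _ _)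
        · rw [if_pos rfl, ← pow_add, ← pow_add, norm_pow]
          exact pow_le_pow_of_le_one (norm_nonneg q) hq1
            ((Nat.le_add_left _ _).trans (Nat.le_add_left _ _))
      have hgn : Summable (fun L : SLn n => ‖q ^ gam n *
          (if headb L.1 = true then q ^ (3*n) * q ^ wB L.1 else q ^ wB L.1)‖) :=
        Summable.of_nonneg_of_le (fun L => norm_nonneg _) hgle ihS
      have e4 : (∑' w : ℕ × SLn n, (q ^ (3*(n+1)))^w.1 * (q ^ gam n *
              (if headb w.2.1 = true then q ^ (3*n) * q ^ wB w.2.1 else q ^ wB w.2.1)))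
          = (∑' k : ℕ, (q ^ (3*(n+1)))^k) * (∑' L : SLn n, q ^ gam n *
              (if headb L.1 = true then q ^ (3*n) * q ^ wB L.1 else q ^ wB L.1)) :=
        (tsum_mul_tsum_of_summable_norm hfn hgn).symm
      have e5 : (∑' L : SLn n, q ^ gam n *
            (if headb L.1 = true then q ^ (3*n) * q ^ wB L.1 else q ^ wB L.1))
          = q ^ gam n * (q ^ (3*n) * ((uu q n).1 * ∏ j ∈ Finset.range n, (1 - q ^ (3*(j+1)))⁻¹)
              + (uu q n).2 * ∏ j ∈ Finset.range n, (1 - q ^ (3*(j+1)))⁻¹) := by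
        rw [tsum_mul_left]
        congr 1
        have hsplit : ∀ L : SLn n,
            (if headb L.1 = true then q ^ (3*n) * q ^ wB L.1 else q ^ wB L.1)
            = q ^ (3*n) * (if headb L.1 = true then q ^ wB L.1 else 0)
              + (if headb L.1 = true then 0 else q ^ wB L.1) := by
          intro L; cases hh : headb L.1 <;> simp [hh]
        rw [tsum_congr hsplit, Summable.tsum_add (sumA.mul_left _) sumB, tsum_mul_left, ihA, ihB]
      rw [e1, e2, e3, e4, tsum_geometric_of_norm_lt_one hrn, e5]
      rw [uu_succ, Finset.prod_range_succ]
      rw [pow_add]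
      ring
    · -- the "head false" sum
      have e1 : (∑' x : SLn (n+1), (if headb x.1 = true then 0 else q ^ wB x.1))
          = ∑' z : (Bool × ℕ) × SLn n, (if z.1.1 = true then 0 else q ^ wB (z.1 :: z.2.1)) := by
        rw [← (consEquiv n).tsum_eq
          (fun x : SLn (n+1) => if headb x.1 = true then 0 else q ^ wB x.1)]
        exact tsum_congr (fun z => rfl)
      have e2 : (∑' z : (Bool × ℕ) × SLn n, (if z.1.1 = true then 0 else q ^ wB (z.1 :: z.2.1)))
          = ∑' w : ℕ × SLn n, q ^ wB ((false, w.1) :: w.2.1) := by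
        have hinj : Function.Injective (fun w : ℕ × SLn n => (((false, w.1), w.2) : (Bool × ℕ) × SLn n)) := by
          intro a b h
          simp only [Prod.mk.injEq] at h
          exact Prod.ext h.1.2 h.2
        have hsupp : Function.support (fun z : (Bool × ℕ) × SLn n =>
            (if z.1.1 = true then 0 else q ^ wB (z.1 :: z.2.1)))
            ⊆ Set.range (fun w : ℕ × SLn n => (((false, w.1), w.2) : (Bool × ℕ) × SLn n)) := by
          rintro ⟨⟨b, m⟩, L⟩ hz
          cases b
          · exact ⟨(m, L), rfl⟩
          · exfalso; apply hz; simp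
        rw [← Function.Injective.tsum_eq hinj hsupp]
        exact tsum_congr (fun w => by simp)
      have hpoint : ∀ (m : ℕ) (L : SLn n), q ^ wB ((false, m) :: L.1)
          = (q ^ (3*(n+1)))^m * (q ^ (3*(n+1)) * q ^ wB L.1) := by
        intro m L
        have he : wB ((false, m) :: L.1) = 3*(n+1)*m + (3*(n+1) + wB L.1) := by
          rw [wB_cons]
          simp [dB, adj]
          try ring
        rw [he, pow_add, pow_mul, pow_add]
      have e3 : (∑' w : ℕ × SLn n, q ^ wB ((false, w.1) :: w.2.1))
          = ∑' w : ℕ × SLn n, (q ^ (3*(n+1)))^w.1 * (q ^ (3*(n+1)) * q ^ wB w.2.1) :=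
        tsum_congr (fun w => hpoint w.1 w.2)
      have hfn : Summable (fun k : ℕ => ‖(q ^ (3*(n+1)))^k‖) := by
        simpa [norm_pow] using hgeoR
      have hgle : ∀ L : SLn n, ‖q ^ (3*(n+1)) * q ^ wB L.1‖ ≤ ‖q‖ ^ wB L.1 := by
        intro L
        rw [← pow_add, norm_pow]
        exact pow_le_pow_of_le_one (norm_nonneg q) hq1 (Nat.le_add_left _ _)
      have hgn : Summable (fun L : SLn n => ‖q ^ (3*(n+1)) * q ^ wB L.1‖) :=
        Summable.of_nonneg_of_le (fun L => norm_nonneg _) hgle ihS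
      have e4 : (∑' w : ℕ × SLn n, (q ^ (3*(n+1)))^w.1 * (q ^ (3*(n+1)) * q ^ wB w.2.1))
          = (∑' k : ℕ, (q ^ (3*(n+1)))^k) * (∑' L : SLn n, q ^ (3*(n+1)) * q ^ wB L.1) :=
        (tsum_mul_tsum_of_summable_norm hfn hgn).symm
      have e5 : (∑' L : SLn n, q ^ (3*(n+1)) * q ^ wB L.1)
          = q ^ (3*(n+1)) * ((uu q n).1 * ∏ j ∈ Finset.range n, (1 - q ^ (3*(j+1)))⁻¹
              + (uu q n).2 * ∏ j ∈ Finset.range n, (1 - q ^ (3*(j+1)))⁻¹) := by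
        rw [tsum_mul_left]
        congr 1
        have hsplit : ∀ L : SLn n, q ^ wB L.1
            = (if headb L.1 = true then q ^ wB L.1 else 0)
              + (if headb L.1 = true then 0 else q ^ wB L.1) := by
          intro L; cases hh : headb L.1 <;> simp [hh]
        rw [tsum_congr hsplit, Summable.tsum_add sumA sumB, ihA, ihB]
      rw [e1, e2, e3, e4, tsum_geometric_of_norm_lt_one hrn, e5]
      rw [uu_succ, Finset.prod_range_succ]
      ring

end GLF2

set_option maxHeartbeats 1000000 in
/-- **Fixed-length generating function, `i = 2`.**
For `|q| < 1` and the polynomial sequence `c = c^{(2)}` (indexed by `ℤ`) defined by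
`c (-2) = c (-1) = 0`, `c 0 = 1`, `c 1 = q^2 + q^3` and the fourth order recurrence below,
the series `∑_{λ ∈ STR, ℓ(λ) = n} q^{|λ|₂}` converges absolutely and equals
`c n (q) / (q³;q³)_n` for every `n ≥ 0`.
(For `n = 0` the last term of the recurrence vanishes because of the factor `1 - q^{3n}`,
so the truncated natural subtraction in the exponent `3*n - 3` is harmless.) -/
theorem fixed_length_generating_function_two
    (q : ℂ) (hq : ‖q‖ < 1)
    (c : ℤ → Polynomial ℤ)
    (hcm2 : c (-2) = 0) (hcm1 : c (-1) = 0)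
    (hc0 : c 0 = 1) (hc1 : c 1 = X ^ 2 + X ^ 3)
    (hrec : ∀ n : ℕ, c ((n : ℤ) + 2) =
      -X ^ (3 * n + 3) * (1 - X ^ 3) * c ((n : ℤ) + 1)
      + X ^ (3 * n + 4) * (1 + X + 2 * X ^ (3 * n + 2)) * c (n : ℤ)
      - X ^ (6 * n + 3) * (1 - X ^ 3) * (1 - X ^ (3 * n)) * c ((n : ℤ) - 1)
      - X ^ (6 * n + 3) * (1 - X ^ (3 * n)) * (1 - X ^ (3 * n - 3)) * c ((n : ℤ) - 2)) :
    ∀ n : ℕ,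
      Summable (fun p : {p : StrictPartition // p.length = n} => ‖(q : ℂ) ^ p.1.wt 2‖) ∧
      (∑' p : {p : StrictPartition // p.length = n}, q ^ p.1.wt 2) =
        (aeval q (c (n : ℤ))) / ∏ j ∈ Finset.range n, (1 - q ^ 3 * (q ^ 3) ^ j) := by
  intro n
  have hqn : ‖q‖ < 1 := hq
  obtain ⟨hS, hA, hB⟩ := GLF2.keyB q hqn n
  have hval := GLF2.aeval_c_eq_dd q c hcm2 hcm1 hc0 hc1 hrec n
  constructor
  · rw [← (GLF2.eqv n).summable_iff]
    have hfun : ((fun p : {p : StrictPartition // p.length = n} => ‖(q : ℂ) ^ p.1.wt 2‖)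
        ∘ ⇑(GLF2.eqv n)) = fun L : GLF2.SLn n => ‖q‖ ^ GLF2.wB L.1 := by
      funext L
      simp [Function.comp, GLF2.wt_eqv, norm_pow]
    rw [hfun]
    exact hS
  · have t1 : (∑' p : {p : StrictPartition // p.length = n}, q ^ p.1.wt 2)
        = ∑' L : GLF2.SLn n, q ^ GLF2.wB L.1 := by
      rw [← (GLF2.eqv n).tsum_eq (fun p : {p : StrictPartition // p.length = n} => q ^ p.1.wt 2)]
      exact tsum_congr (fun L => by rw [GLF2.wt_eqv])
    rw [t1]
    have hsplit : ∀ L : GLF2.SLn n, q ^ GLF2.wB L.1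
        = (if GLF2.headb L.1 = true then q ^ GLF2.wB L.1 else 0)
          + (if GLF2.headb L.1 = true then 0 else q ^ GLF2.wB L.1) := by
      intro L; cases hh : GLF2.headb L.1 <;> simp [hh]
    have sumA : Summable (fun L : GLF2.SLn n =>
        if GLF2.headb L.1 = true then q ^ GLF2.wB L.1 else 0) := by
      apply Summable.of_norm_bounded hS
      intro L
      cases hh : GLF2.headb L.1 <;> simp [hh, norm_pow] <;> positivity
    have sumB : Summable (fun L : GLF2.SLn n =>
        if GLF2.headb L.1 = true then 0 else q ^ GLF2.wB L.1) := by
      apply Summable.of_norm_bounded hS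
      intro L
      cases hh : GLF2.headb L.1 <;> simp [hh, norm_pow] <;> positivity
    rw [tsum_congr hsplit, Summable.tsum_add sumA sumB, hA, hB, hval, GLF2.dd]
    have hprod : ∏ j ∈ Finset.range n, (1 - q^3 * (q^3)^j)
        = ∏ j ∈ Finset.range n, (1 - q^(3*(j+1))) := by
      apply Finset.prod_congr rfl
      intro j _
      congr 1
      rw [mul_comm 3 (j+1), pow_mul, pow_succ]
      ring
    rw [hprod, div_eq_mul_inv, ← Finset.prod_inv_distrib]
    ring
end
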